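/- arXiv:cs/0205047 — 5 statements merged into one kernel-verified Lean document; each statement's English description precedes it below -/
import Mathlib

section
/- Chernoff bound, lower tail: let X_1, …, X_k be independent random variables taking values in [0,1], let μ > 0 satisfy E[X_1 + ⋯ + X_k] ≥ μ, and let 0 < ε < 1. Then P[X_1 + ⋯ + X_k ≤ (1−ε)μ] < exp(−chern(−ε) · μ), where chern(ε) := (1+ε)·ln(1+ε) − ε. -/
open MeasureTheory ProbabilityTheory

/-- `chern ε = (1+ε)·ln(1+ε) − ε`. -/
noncomputable def chern (ε : ℝ) : ℝ := (1 + ε) * Real.log (1 + ε) - ε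

/-- **Chernoff bound, lower tail.** If `X₁, …, X_k` are independent `[0,1]`-valued
random variables with `E[X₁ + ⋯ + X_k] ≥ μ`, `μ > 0` and `0 < ε < 1`, then
`P[X₁ + ⋯ + X_k ≤ (1−ε)·μ] < exp(−chern(−ε)·μ)`. -/
theorem chernoff_lower_tail
    {Ω : Type*} [MeasurableSpace Ω] (P : Measure Ω) [IsProbabilityMeasure P]
    (k : ℕ) (X : Fin k → Ω → ℝ) (hXmeas : ∀ i, Measurable (X i))
    (hX01 : ∀ i, ∀ᵐ ω ∂P, X i ω ∈ Set.Icc (0 : ℝ) 1)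
    (hindep : iIndepFun X P)
    (μ : ℝ) (hμ : 0 < μ) (hmean : μ ≤ ∫ ω, ∑ i, X i ω ∂P)
    (ε : ℝ) (hε0 : 0 < ε) (hε1 : ε < 1) :
    (P {ω | ∑ i, X i ω ≤ (1 - ε) * μ}).toReal < Real.exp (-(chern (-ε)) * μ) := by
  have h1ε : (0:ℝ) < 1 - ε := by linarith
  set t := Real.log (1 - ε) with ht_def
  have htneg : t < 0 := Real.log_neg h1ε (by linarith)
  have het : Real.exp t = 1 - ε := Real.exp_log h1ε
  -- integrability facts
  have hintX : ∀ i, Integrable (X i) P := by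
    intro i
    refine Integrable.mono' (integrable_const 1) (hXmeas i).aestronglyMeasurable ?_
    filter_upwards [hX01 i] with ω hω
    rw [Real.norm_eq_abs, abs_of_nonneg hω.1]; exact hω.2
  have hint : ∀ i, Integrable (fun ω => Real.exp (t * X i ω)) P := by
    intro i
    refine Integrable.mono' (integrable_const 1)
      ((hXmeas i).const_mul t).exp.aestronglyMeasurable ?_
    filter_upwards [hX01 i] with ω hω
    rw [Real.norm_eq_abs, abs_of_pos (Real.exp_pos _)]
    exact Real.exp_le_one_iff.mpr (mul_nonpos_of_nonpos_of_nonneg htneg.le hω.1)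
  have hX01' : ∀ᵐ ω ∂P, ∀ i, X i ω ∈ Set.Icc (0:ℝ) 1 := (ae_all_iff).mpr hX01
  have hSeq : (∑ i, X i) = fun ω => ∑ i, X i ω := by
    ext ω; rw [Finset.sum_apply]
  have hSmeas : Measurable (∑ i, X i) := by
    rw [hSeq]; exact Finset.measurable_sum _ fun i _ => hXmeas i
  have hintS : Integrable (fun ω => Real.exp (t * (∑ i, X i) ω)) P := by
    refine Integrable.mono' (integrable_const 1)
      ((hSmeas.const_mul t).exp).aestronglyMeasurable ?_
    filter_upwards [hX01'] with ω hω
    rw [Real.norm_eq_abs, abs_of_pos (Real.exp_pos _)]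
    refine Real.exp_le_one_iff.mpr (mul_nonpos_of_nonpos_of_nonneg htneg.le ?_)
    rw [hSeq]
    exact Finset.sum_nonneg fun i _ => (hω i).1
  -- Markov / Chernoff step
  have hmarkov := measure_le_le_exp_mul_mgf (X := (∑ i, X i)) (μ := P) ((1 - ε) * μ)
    htneg.le hintS
  have hset : {ω | (∑ i, X i) ω ≤ (1 - ε) * μ} = {ω | ∑ i, X i ω ≤ (1 - ε) * μ} := by
    ext ω; simp [Finset.sum_apply]
  rw [hset] at hmarkov
  -- per-coordinate mgf bound
  set m : Fin k → ℝ := fun i => ∫ ω, X i ω ∂P with hm_def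
  have hkey : ∀ x ∈ Set.Icc (0:ℝ) 1, Real.exp (t * x) ≤ 1 + (Real.exp t - 1) * x := by
    intro x hx
    have h := convexOn_exp.2 (Set.mem_univ (0:ℝ)) (Set.mem_univ t)
      (by linarith [hx.2] : (0:ℝ) ≤ 1 - x) hx.1 (by ring)
    simp only [smul_eq_mul, mul_zero, zero_add, Real.exp_zero, mul_one] at h
    rw [mul_comm t x]; nlinarith [h]
  have hm0 : ∀ i, 0 ≤ m i := by
    intro i
    exact integral_nonneg_of_ae ((hX01 i).mono fun ω hω => hω.1)
  have hm1 : ∀ i, m i ≤ 1 := by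
    intro i
    calc m i ≤ ∫ _, (1:ℝ) ∂P :=
          integral_mono_ae (hintX i) (integrable_const 1) ((hX01 i).mono fun ω hω => hω.2)
      _ = 1 := by simp
  have hmgf_le : ∀ i, mgf (X i) P t ≤ 1 + (Real.exp t - 1) * m i := by
    intro i
    have : mgf (X i) P t ≤ ∫ ω, (1 + (Real.exp t - 1) * X i ω) ∂P := by
      refine integral_mono_ae (hint i)
        ((integrable_const 1).add ((hintX i).const_mul _)) ?_
      filter_upwards [hX01 i] with ω hω using hkey _ hω
    refine this.trans_eq ?_
    rw [integral_add (integrable_const 1) ((hintX i).const_mul _),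
      integral_const, integral_const_mul]
    simp [hm_def]
  have hfac_pos : ∀ i, 0 < 1 + (Real.exp t - 1) * m i := by
    intro i
    have := hm1 i; have := hm0 i
    rw [het]; nlinarith
  -- some coordinate has positive mean
  have hsum_m : ∑ i, m i = ∫ ω, ∑ i, X i ω ∂P :=
    (integral_finset_sum _ fun i _ => hintX i).symm
  have hμsum : μ ≤ ∑ i, m i := hsum_m ▸ hmean
  obtain ⟨i0, _, hi0⟩ : ∃ i ∈ Finset.univ, (0:ℝ) < m i := by
    by_contra hcon
    push_neg at hcon
    have : ∑ i, m i ≤ 0 := Finset.sum_nonpos fun i hi => hcon i hi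
    linarith
  -- strict product bound
  have hprod : ∏ i, mgf (X i) P t < ∏ i, Real.exp ((Real.exp t - 1) * m i) := by
    refine Finset.prod_lt_prod (fun i _ => mgf_pos (hint i)) ?_ ⟨i0, Finset.mem_univ _, ?_⟩
    · intro i _
      refine (hmgf_le i).trans ?_
      have := Real.add_one_le_exp ((Real.exp t - 1) * m i)
      linarith
    · refine (hmgf_le i0).trans_lt ?_
      have hne : (Real.exp t - 1) * m i0 ≠ 0 := by
        apply mul_ne_zero _ hi0.ne'
        rw [het]; intro h; linarith
      have := Real.add_one_lt_exp hne
      linarith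
  have hprod2 : ∏ i, Real.exp ((Real.exp t - 1) * m i) ≤ Real.exp (-ε * μ) := by
    rw [← Real.exp_sum, ← Finset.mul_sum, Real.exp_le_exp, het]
    nlinarith
  have hmgf_sum : mgf (∑ i, X i) P t = ∏ i, mgf (X i) P t :=
    hindep.mgf_sum hXmeas Finset.univ
  have hfinal : (P {ω | ∑ i, X i ω ≤ (1 - ε) * μ}).toReal
      < Real.exp (-t * ((1 - ε) * μ)) * Real.exp (-ε * μ) := by
    refine hmarkov.trans_lt ?_
    rw [hmgf_sum]
    exact mul_lt_mul_of_pos_left (hprod.trans_le hprod2) (Real.exp_pos _)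
  refine hfinal.trans_le (le_of_eq ?_)
  rw [← Real.exp_add, Real.exp_eq_exp, chern]
  have : (1:ℝ) + -ε = 1 - ε := by ring
  rw [this, ← ht_def]
  ring
end

section
/- A coupon-collector-type bound via Wald's inequality: Let Δ be a positive integer and let u_0, u_1, u_2, … be a nonincreasing sequence of ℕ-valued random variables with u_0 = Δ almost surely. Let T := min{t ≥ 1 : u_t = 0}, and suppose E[T] < ∞. Let p > 0 and suppose that for every t ≥ 1, almost surely on the event {T ≥ t}, E[(u_{t−1} − u_t)/u_{t−1} | σ(u_0, …, u_{t−1})] ≥ p (note u_{t−1} ≥ 1 on {T ≥ t}). Then E[T] ≤ H_Δ / p, where H_Δ := 1 + 1/2 + ⋯ + 1/Δ. -/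
open MeasureTheory ProbabilityTheory Filter

lemma harm_key (a b : ℕ) (h : b ≤ a) :
    ((a:ℝ) - b) / a ≤ (∑ i ∈ Finset.Icc 1 a, (1:ℝ)/i) - ∑ i ∈ Finset.Icc 1 b, (1:ℝ)/i := by
  have hsplit : (∑ i ∈ Finset.Icc 1 a, (1:ℝ)/i) - ∑ i ∈ Finset.Icc 1 b, (1:ℝ)/i
      = ∑ i ∈ Finset.Ioc b a, (1:ℝ)/i := by
    have h1 : ∀ n : ℕ, Finset.Icc 1 n = Finset.Ioc 0 n := by
      intro n; ext x; simp [Nat.lt_iff_add_one_le]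
    rw [h1, h1, sub_eq_iff_eq_add']
    exact (Finset.sum_Ioc_consecutive _ (Nat.zero_le b) h).symm
  rw [hsplit]
  rcases Nat.eq_zero_or_pos a with ha | ha
  · subst ha; interval_cases b; simp
  · have hcard : (Finset.Ioc b a).card = a - b := Nat.card_Ioc b a
    have h2 : ((a:ℝ) - b)/a = (Finset.Ioc b a).card • ((1:ℝ)/a) := by
      rw [hcard, nsmul_eq_mul, Nat.cast_sub h]
      field_simp
    rw [h2]
    refine Finset.card_nsmul_le_sum _ _ _ (fun i hi => ?_)
    simp only [Finset.mem_Ioc] at hi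
    apply one_div_le_one_div_of_le
    · exact_mod_cast Nat.lt_of_le_of_lt (Nat.zero_le b) hi.1
    · exact_mod_cast hi.2

lemma harm_mono : Monotone (fun n : ℕ => ∑ i ∈ Finset.Icc 1 n, (1:ℝ)/i) := by
  intro a b hab
  apply Finset.sum_le_sum_of_subset_of_nonneg
  · exact Finset.Icc_subset_Icc_right hab
  · intro i _ _; positivity

lemma harm_nonneg (n : ℕ) : 0 ≤ ∑ i ∈ Finset.Icc 1 n, (1:ℝ)/i := by
  apply Finset.sum_nonneg; intro i _; positivity

/-- **A coupon-collector-type bound via Wald's inequality.** Let `Δ ≥ 1` and let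
`u₀, u₁, u₂, …` be a nonincreasing sequence of `ℕ`-valued random variables with
`u₀ = Δ` a.s.  Let `T := min {t ≥ 1 : u_t = 0}` and suppose `E[T] < ∞`.  If
`p > 0` and for every `t ≥ 1`, a.s. on the event `{T ≥ t}`,
`E[(u_{t−1} − u_t)/u_{t−1} | σ(u₀, …, u_{t−1})] ≥ p`, then
`E[T] ≤ H_Δ / p`, where `H_Δ = 1 + 1/2 + ⋯ + 1/Δ`. -/
theorem coupon_collector_wald
    {Ω : Type*} [MeasurableSpace Ω] (P : Measure Ω) [IsProbabilityMeasure P]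
    (Δ : ℕ) (hΔ : 0 < Δ)
    (u : ℕ → Ω → ℕ) (humeas : ∀ t, Measurable (u t))
    (hmono : ∀ (t : ℕ) (ω : Ω), u (t + 1) ω ≤ u t ω)
    (hu0 : ∀ᵐ ω ∂P, u 0 ω = Δ)
    (T : Ω → ℕ)
    (hTdef : ∀ ω, T ω = sInf {t : ℕ | 1 ≤ t ∧ u t ω = 0})
    (hhits : ∀ᵐ ω ∂P, ∃ t : ℕ, 1 ≤ t ∧ u t ω = 0)
    (hTint : Integrable (fun ω => (T ω : ℝ)) P)
    (p : ℝ) (hp : 0 < p)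
    (hcond : ∀ t : ℕ, 1 ≤ t → ∀ᵐ ω ∂P, t ≤ T ω →
      p ≤ (P[fun ω' => ((u (t - 1) ω' : ℝ) - (u t ω' : ℝ)) / (u (t - 1) ω' : ℝ) |
            ⨆ s ∈ Finset.range t, MeasurableSpace.comap (u s) inferInstance]) ω) :
    ∫ ω, (T ω : ℝ) ∂P ≤ (∑ i ∈ Finset.Icc 1 Δ, (1 : ℝ) / i) / p := by
  classical
  set H : ℕ → ℝ := fun n => ∑ i ∈ Finset.Icc 1 n, (1:ℝ)/i with hHdef
  -- antitonicity of u in t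
  have hanti : ∀ (ω : Ω), ∀ a b : ℕ, a ≤ b → u b ω ≤ u a ω := by
    intro ω
    have : Antitone (fun n => u n ω) := antitone_nat_of_succ_le (fun n => hmono n ω)
    exact fun a b hab => this hab
  -- filtration
  set F : ℕ → MeasurableSpace Ω :=
    fun t => ⨆ s ∈ Finset.range t, MeasurableSpace.comap (u s) inferInstance with hFdef
  have hF : ∀ t, F t ≤ ‹MeasurableSpace Ω› := by
    intro t
    exact iSup₂_le fun s _ => (humeas s).comap_le
  -- increments
  set Y : ℕ → Ω → ℝ := fun t ω => H (u t ω) - H (u (t+1) ω) with hYdef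
  have hHumeas : ∀ t, Measurable (fun ω => H (u t ω)) := fun t =>
    (measurable_from_top : Measurable H).comp (humeas t)
  have hYmeas : ∀ t, Measurable (Y t) := fun t => (hHumeas t).sub (hHumeas (t+1))
  have hYnonneg : ∀ t ω, 0 ≤ Y t ω := fun t ω => sub_nonneg.2 (harm_mono (hmono t ω))
  have hYbound : ∀ t, ∀ᵐ ω ∂P, ‖Y t ω‖ ≤ H Δ := by
    intro t
    filter_upwards [hu0] with ω h0
    rw [Real.norm_eq_abs, abs_of_nonneg (hYnonneg t ω)]
    have h1 : H (u t ω) ≤ H Δ := by rw [← h0]; exact harm_mono (hanti ω 0 t (Nat.zero_le t))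
    have h2 : 0 ≤ H (u (t+1) ω) := harm_nonneg _
    simp only [hYdef]; linarith
  have hYint : ∀ t, Integrable (Y t) P := fun t =>
    Integrable.mono' (integrable_const (H Δ)) (hYmeas t).aestronglyMeasurable (hYbound t)
  -- ratios
  set R : ℕ → Ω → ℝ := fun t ω => ((u t ω : ℝ) - (u (t+1) ω : ℝ)) / (u t ω : ℝ) with hRdef
  have hNmeas : ∀ t, Measurable (fun ω => (u t ω : ℝ)) := fun t =>
    (measurable_from_top : Measurable (fun n : ℕ => (n:ℝ))).comp (humeas t)
  have hRmeas : ∀ t, Measurable (R t) :=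
    fun t => ((hNmeas t).sub (hNmeas (t+1))).div (hNmeas t)
  have hRbound : ∀ t ω, ‖R t ω‖ ≤ 1 := by
    intro t ω
    rw [Real.norm_eq_abs]
    rcases Nat.eq_zero_or_pos (u t ω) with h0 | h0
    · simp [hRdef, h0]
    · have hden : (0:ℝ) < u t ω := by exact_mod_cast h0
      have hnum1 : (0:ℝ) ≤ (u t ω : ℝ) - u (t+1) ω := by
        have := hmono t ω; linarith [(Nat.cast_le (α := ℝ)).2 this]
      have hnum2 : (u t ω : ℝ) - u (t+1) ω ≤ u t ω := by
        have : (0:ℝ) ≤ u (t+1) ω := Nat.cast_nonneg _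
        linarith
      rw [abs_of_nonneg (div_nonneg hnum1 hden.le)]
      rw [div_le_one hden]; exact hnum2
  have hRint : ∀ t, Integrable (R t) P := fun t =>
    Integrable.mono' (integrable_const 1) (hRmeas t).aestronglyMeasurable
      (Filter.Eventually.of_forall (hRbound t))
  have hRY : ∀ t ω, R t ω ≤ Y t ω := fun t ω => harm_key (u t ω) (u (t+1) ω) (hmono t ω)
  -- event identification
  have hTS : ∀ᵐ ω ∂P, ∀ t : ℕ, (u t ω ≠ 0 ↔ t + 1 ≤ T ω) := by
    filter_upwards [hu0, hhits] with ω h0 hh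
    have hne : {t : ℕ | 1 ≤ t ∧ u t ω = 0}.Nonempty := hh
    have hmem : 1 ≤ T ω ∧ u (T ω) ω = 0 := by
      rw [hTdef ω]; exact Nat.sInf_mem hne
    intro t
    constructor
    · intro hne0
      by_contra hlt
      push_neg at hlt
      have hle : T ω ≤ t := Nat.lt_succ_iff.mp hlt
      exact hne0 (Nat.le_zero.mp (hmem.2 ▸ hanti ω (T ω) t hle))
    · intro hle heq0
      rcases Nat.eq_zero_or_pos t with ht | ht
      · subst ht; rw [h0] at heq0; omega
      · have : T ω ≤ t := by
          rw [hTdef ω]; exact Nat.sInf_le ⟨ht, heq0⟩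
        omega
  -- per-step bound
  have hstep : ∀ t : ℕ, p * (P {ω | u t ω ≠ 0}).toReal ≤ ∫ ω, Y t ω ∂P := by
    intro t
    set B : Set Ω := {ω | u t ω ≠ 0} with hBdef
    have hBm0 : MeasurableSet B := (humeas t (measurableSet_singleton 0)).compl
    have hBF : MeasurableSet[F (t+1)] B := by
      have h1 : MeasurableSpace.comap (u t) inferInstance ≤ F (t+1) := by
        rw [hFdef]
        exact le_iSup₂ (f := fun s _ => MeasurableSpace.comap (u s) inferInstance) t
          (Finset.self_mem_range_succ t)
      exact h1 _ ⟨({0}ᶜ : Set ℕ), (measurableSet_singleton 0).compl, rfl⟩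
    have hcond' := hcond (t+1) (Nat.le_add_left 1 t)
    have hmce : P[R t | F (t+1)] ≤ᵐ[P] P[Y t | F (t+1)] :=
      condExp_mono (hRint t) (hYint t) (Filter.Eventually.of_forall (hRY t))
    have hae : ∀ᵐ ω ∂P, ω ∈ B → p ≤ (P[Y t | F (t+1)]) ω := by
      filter_upwards [hcond', hTS, hmce] with ω h1 h2 h3 hB
      exact le_trans (h1 ((h2 t).1 hB)) h3
    calc p * (P B).toReal = ∫ _ω in B, p ∂P := by
          rw [setIntegral_const, smul_eq_mul, mul_comm, Measure.real]
      _ ≤ ∫ ω in B, (P[Y t | F (t+1)]) ω ∂P := by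
          apply setIntegral_mono_ae_restrict ((integrableOn_const (measure_ne_top _ _)))
            integrable_condExp.integrableOn
          exact (ae_restrict_iff' hBm0).2 hae
      _ = ∫ ω in B, Y t ω ∂P := setIntegral_condExp (hF (t+1)) (hYint t) hBF
      _ ≤ ∫ ω, Y t ω ∂P :=
          setIntegral_le_integral (hYint t) (Filter.Eventually.of_forall (hYnonneg t))
  -- telescoping sum bound
  have hsum : ∀ N : ℕ, ∑ t ∈ Finset.range N, ∫ ω, Y t ω ∂P ≤ H Δ := by
    intro N
    rw [← integral_finset_sum _ (fun t _ => hYint t)]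
    have hint0 : Integrable (fun ω => H (u 0 ω)) P :=
      (integrable_const (H Δ)).congr (hu0.mono fun ω h => by simp only [h])
    have step1 : ∫ ω, ∑ t ∈ Finset.range N, Y t ω ∂P ≤ ∫ ω, H (u 0 ω) ∂P := by
      apply integral_mono (integrable_finset_sum _ (fun t _ => hYint t)) hint0
      intro ω
      have htel : ∑ t ∈ Finset.range N, Y t ω = H (u 0 ω) - H (u N ω) :=
        Finset.sum_range_sub' (fun t => H (u t ω)) N
      show (∑ t ∈ Finset.range N, Y t ω) ≤ H (u 0 ω)
      rw [htel]
      have := harm_nonneg (u N ω)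
      linarith
    have step2 : ∫ ω, H (u 0 ω) ∂P = H Δ := by
      rw [integral_congr_ae (g := fun _ => H Δ) (hu0.mono fun ω h => by simp only [h]),
        integral_const]
      simp
    linarith
  -- indicator sums
  set g : ℕ → Ω → ℝ := fun N ω => ∑ t ∈ Finset.range N, if u t ω ≠ 0 then (1:ℝ) else 0
    with hgdef
  have hgmeas : ∀ N, Measurable (g N) := by
    intro N
    apply Finset.measurable_sum
    intro t _
    exact Measurable.ite (humeas t (measurableSet_singleton 0)).compl measurable_const
      measurable_const
  have hind_int : ∀ t : ℕ, Integrable (fun ω => if u t ω ≠ 0 then (1:ℝ) else 0) P := by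
    intro t
    apply Integrable.mono' (integrable_const 1)
      (Measurable.ite (humeas t (measurableSet_singleton 0)).compl measurable_const
        measurable_const).aestronglyMeasurable
    apply Filter.Eventually.of_forall
    intro ω
    by_cases h : u t ω ≠ 0 <;> simp [h]
  have hind_eq : ∀ t : ℕ, ∫ ω, (if u t ω ≠ 0 then (1:ℝ) else 0) ∂P
      = (P {ω | u t ω ≠ 0}).toReal := by
    intro t
    have hBm0 : MeasurableSet {ω | u t ω ≠ 0} := (humeas t (measurableSet_singleton 0)).compl
    have : (fun ω => if u t ω ≠ 0 then (1:ℝ) else 0)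
        = Set.indicator {ω | u t ω ≠ 0} (fun _ => (1:ℝ)) := by
      funext ω
      rw [Set.indicator_apply]
      simp [Set.mem_setOf_eq]
    rw [this, integral_indicator_const (1:ℝ) hBm0, smul_eq_mul, mul_one, Measure.real]
  have hgval : ∀ᵐ ω ∂P, ∀ N : ℕ, g N ω = ((min (T ω) N : ℕ) : ℝ) := by
    filter_upwards [hTS] with ω hω N
    have h1 : g N ω = ∑ t ∈ Finset.range N, if t < T ω then (1:ℝ) else 0 := by
      apply Finset.sum_congr rfl
      intro t _
      have := hω t
      simp only [Nat.lt_iff_add_one_le]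
      rw [if_congr this rfl rfl]
    rw [h1, Finset.sum_boole]
    have h2 : (Finset.range N).filter (fun t => t < T ω) = Finset.range (min (T ω) N) := by
      ext x
      simp [Nat.lt_min, and_comm]
    rw [h2, Finset.card_range]
  -- limit of integrals
  have hglim : Tendsto (fun N => ∫ ω, g N ω ∂P) atTop (nhds (∫ ω, (T ω : ℝ) ∂P)) := by
    apply tendsto_integral_of_dominated_convergence (fun ω => (T ω : ℝ))
      (fun N => (hgmeas N).aestronglyMeasurable) hTint
    · intro N
      filter_upwards [hgval] with ω hω
      rw [hω N, Real.norm_eq_abs, abs_of_nonneg (by positivity)]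
      exact_mod_cast min_le_left _ _
    · filter_upwards [hgval] with ω hω
      have hev : (fun N => g N ω) =ᶠ[atTop] (fun _ => (T ω : ℝ)) := by
        rw [Filter.eventuallyEq_iff_exists_mem]
        refine ⟨Set.Ici (T ω), Filter.Ici_mem_atTop _, fun N hN => ?_⟩
        show g N ω = ((T ω : ℕ) : ℝ)
        rw [hω N, min_eq_left hN]
      exact Tendsto.congr' hev.symm tendsto_const_nhds
  -- main bound for each N
  have hmain : ∀ N : ℕ, p * ∫ ω, g N ω ∂P ≤ H Δ := by
    intro N
    have h1 : ∫ ω, g N ω ∂P = ∑ t ∈ Finset.range N, (P {ω | u t ω ≠ 0}).toReal := by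
      rw [hgdef]
      rw [integral_finset_sum _ (fun t _ => hind_int t)]
      exact Finset.sum_congr rfl fun t _ => hind_eq t
    rw [h1, Finset.mul_sum]
    calc ∑ t ∈ Finset.range N, p * (P {ω | u t ω ≠ 0}).toReal
        ≤ ∑ t ∈ Finset.range N, ∫ ω, Y t ω ∂P :=
          Finset.sum_le_sum fun t _ => hstep t
      _ ≤ H Δ := hsum N
  -- conclude
  have hfinal : p * ∫ ω, (T ω : ℝ) ∂P ≤ H Δ :=
    le_of_tendsto (tendsto_const_nhds.mul hglim) (Filter.Eventually.of_forall hmain)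
  rw [le_div_iff₀ hp]
  linarith
end

section
/- Weighted k-medians rounding guarantee (existence form): Consider a facility-location instance with a finite set F of facilities, a finite nonempty set C of n customers, costs cost : F → ℝ≥0, and distances dist : F × C → ℝ≥0. Let 0 < ε and d ≥ 0, k > 0, and suppose there exists a fractional solution x with facility cost cost(x) ≤ k and assignment cost dist(x) ≤ d. Then there exists a nonempty subset S ⊆ F of facilities with assignment cost dist(S) = Σ_{c ∈ C} min_{f ∈ S} dist(f,c) ≤ (1+ε)·d and facility cost cost(S) = Σ_{f ∈ S} cost(f) ≤ k·ln(n + n/ε) + max_{f ∈ F} cost(f). -/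
open Finset

noncomputable def gvAux {F C : Type*} (dst : F → C → ℝ) (cap : ℝ) (S : Finset F) (c : C) : ℝ :=
  S.fold min cap (fun f => dst f c)

lemma gvAux_empty {F C : Type*} (dst : F → C → ℝ) (cap : ℝ) (c : C) :
    gvAux dst cap ∅ c = cap := rfl

lemma gvAux_insert {F C : Type*} [DecidableEq F] (dst : F → C → ℝ) (cap : ℝ)
    (f : F) (S : Finset F) (c : C) :
    gvAux dst cap (insert f S) c = min (dst f c) (gvAux dst cap S c) :=
  Finset.fold_insert_idem

lemma gvAux_le_cap {F C : Type*} (dst : F → C → ℝ) (cap : ℝ) (S : Finset F) (c : C) :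
    gvAux dst cap S c ≤ cap :=
  (Finset.fold_min_le _).2 (Or.inl le_rfl)

lemma gvAux_le_dist {F C : Type*} (dst : F → C → ℝ) (cap : ℝ) {S : Finset F} {f : F}
    (hf : f ∈ S) (c : C) : gvAux dst cap S c ≤ dst f c :=
  (Finset.fold_min_le _).2 (Or.inr ⟨f, hf, le_rfl⟩)

lemma gvAux_nonneg {F C : Type*} {dst : F → C → ℝ} {cap : ℝ} (hcap : 0 ≤ cap)
    (hdst : ∀ f c, 0 ≤ dst f c) (S : Finset F) (c : C) : 0 ≤ gvAux dst cap S c :=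
  (Finset.le_fold_min _).2 ⟨hcap, fun f _ => hdst f c⟩

lemma gvAux_eq_cap {F C : Type*} {dst : F → C → ℝ} {cap : ℝ} {S : Finset F} {c : C}
    (h : ∀ f ∈ S, cap ≤ dst f c) : gvAux dst cap S c = cap :=
  le_antisymm (gvAux_le_cap _ _ _ _) ((Finset.le_fold_min _).2 ⟨le_rfl, h⟩)

lemma gvAux_eq_inf' {F C : Type*} {dst : F → C → ℝ} {cap : ℝ} {S : Finset F}
    (hS : S.Nonempty) {c : C} {f : F} (hf : f ∈ S) (hlt : dst f c < cap) :
    gvAux dst cap S c = S.inf' hS (fun f => dst f c) := by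
  have h1 : gvAux dst cap S c ≤ S.inf' hS (fun f => dst f c) :=
    Finset.le_inf' hS _ (fun g hg => gvAux_le_dist dst cap hg c)
  have h2 : S.inf' hS (fun f => dst f c) ≤ gvAux dst cap S c := by
    have hle : S.inf' hS (fun f => dst f c) ≤ dst f c := Finset.inf'_le _ hf
    refine le_trans (le_min (le_of_lt (lt_of_le_of_lt hle hlt)) le_rfl) ?_
    exact (Finset.le_fold_min _).2 ⟨min_le_left _ _, fun g hg =>
      min_le_of_right_le (Finset.inf'_le _ hg)⟩
  exact le_antisymm h1 h2


section
variable {F C : Type*} [Fintype F] [Fintype C] [DecidableEq F]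

lemma stepExists
    (cost : F → ℝ) (hcost : ∀ f, 0 ≤ cost f)
    (dst : F → C → ℝ) (cap k : ℝ) (hk : 0 < k)
    (x : F → ℝ) (xa : F → C → ℝ)
    (hx0 : ∀ f, 0 ≤ x f) (hxa0 : ∀ f c, 0 ≤ xa f c)
    (hxle : ∀ f c, xa f c ≤ x f) (hxs : ∀ c, ∑ f, xa f c = 1)
    (hkx : ∑ f, x f * cost f ≤ k)
    (S : Finset F)
    (hES : 0 < (∑ c, gvAux dst cap S c) - ∑ c, ∑ f, xa f c * dst f c) :
    ∃ f ∉ S, (∑ c, gvAux dst cap (insert f S) c) - (∑ c, ∑ f, xa f c * dst f c)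
      ≤ ((∑ c, gvAux dst cap S c) - ∑ c, ∑ f, xa f c * dst f c) * (1 - cost f / k) := by
  set D : ℝ := ∑ c, ∑ f, xa f c * dst f c with hD
  set G : ℝ := ∑ c, gvAux dst cap S c with hG
  set G' : F → ℝ := fun f => ∑ c, gvAux dst cap (insert f S) c with hG'
  have hgmono : ∀ f c, gvAux dst cap (insert f S) c ≤ gvAux dst cap S c := by
    intro f c; rw [gvAux_insert]; exact min_le_right _ _
  have hgdist : ∀ f c, gvAux dst cap (insert f S) c ≤ dst f c := by
    intro f c; rw [gvAux_insert]; exact min_le_left _ _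
  -- key pointwise inequality
  have key : ∀ c, gvAux dst cap S c - ∑ f, xa f c * dst f c
      ≤ ∑ f, x f * (gvAux dst cap S c - gvAux dst cap (insert f S) c) := by
    intro c
    have h0 : gvAux dst cap S c - ∑ f, xa f c * dst f c
        = ∑ f, (xa f c * gvAux dst cap S c - xa f c * dst f c) := by
      rw [Finset.sum_sub_distrib, ← Finset.sum_mul, hxs c, one_mul]
    rw [h0]
    refine Finset.sum_le_sum (fun f _ => ?_)
    have h1 : xa f c * gvAux dst cap S c - xa f c * dst f c
        ≤ xa f c * (gvAux dst cap S c - gvAux dst cap (insert f S) c) := by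
      have := hgdist f c
      have hxa := hxa0 f c
      nlinarith
    have h2 : xa f c * (gvAux dst cap S c - gvAux dst cap (insert f S) c)
        ≤ x f * (gvAux dst cap S c - gvAux dst cap (insert f S) c) :=
      mul_le_mul_of_nonneg_right (hxle f c) (sub_nonneg.2 (hgmono f c))
    linarith
  have keysum : G - D ≤ ∑ f, x f * (G - G' f) := by
    have h0 : G - D = ∑ c, (gvAux dst cap S c - ∑ f, xa f c * dst f c) := by
      rw [Finset.sum_sub_distrib]
    have h1 : ∑ c, (gvAux dst cap S c - ∑ f, xa f c * dst f c)
        ≤ ∑ c, ∑ f, x f * (gvAux dst cap S c - gvAux dst cap (insert f S) c) :=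
      Finset.sum_le_sum (fun c _ => key c)
    have h2 : ∑ c, ∑ f, x f * (gvAux dst cap S c - gvAux dst cap (insert f S) c)
        = ∑ f, x f * (G - G' f) := by
      rw [Finset.sum_comm]
      refine Finset.sum_congr rfl (fun f _ => ?_)
      rw [← Finset.mul_sum, Finset.sum_sub_distrib]
    rw [h0, ← h2]; exact h1
  by_contra hcon
  push_neg at hcon
  -- hcon : ∀ f ∉ S, (G - D) * (1 - cost f / k) < G' f - D
  have hWS : ∀ f ∈ S, G - G' f = 0 := by
    intro f hf
    have : insert f S = S := Finset.insert_eq_self.2 hf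
    simp [hG', this, hG]
  have hWle : ∀ f, x f * (k * (G - G' f)) ≤ x f * (cost f * (G - D)) := by
    intro f
    by_cases hf : f ∈ S
    · rw [hWS f hf, mul_zero, mul_zero]
      exact mul_nonneg (hx0 f) (mul_nonneg (hcost f) hES.le)
    · have h := hcon f hf
      have h2 : k * (G - G' f) ≤ cost f * (G - D) := by
        have hk' : k ≠ 0 := ne_of_gt hk
        have heq : (G - D) * (1 - cost f / k) = (G - D) - (G - D) * cost f / k := by
          field_simp
        rw [heq] at h
        have hGf : G' f = ∑ c, gvAux dst cap (insert f S) c := rfl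
        rw [← hGf] at h
        have h5 : (G - D) * cost f / k * k = (G - D) * cost f := div_mul_cancel₀ _ hk'
        nlinarith [hk]
      exact mul_le_mul_of_nonneg_left h2 (hx0 f)
  by_cases hax : ∀ f ∉ S, x f = 0
  · have hzero : ∑ f, x f * (G - G' f) = 0 := by
      refine Finset.sum_eq_zero (fun f _ => ?_)
      by_cases hf : f ∈ S
      · rw [hWS f hf, mul_zero]
      · rw [hax f hf, zero_mul]
    rw [hzero] at keysum; linarith
  · push_neg at hax
    obtain ⟨f₀, hf₀S, hf₀x⟩ := hax
    have hf₀pos : 0 < x f₀ := lt_of_le_of_ne (hx0 f₀) (Ne.symm hf₀x)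
    have hstrict : x f₀ * (k * (G - G' f₀)) < x f₀ * (cost f₀ * (G - D)) := by
      have h := hcon f₀ hf₀S
      have h2 : k * (G - G' f₀) < cost f₀ * (G - D) := by
        have hk' : k ≠ 0 := ne_of_gt hk
        have heq : (G - D) * (1 - cost f₀ / k) = (G - D) - (G - D) * cost f₀ / k := by
          field_simp
        rw [heq] at h
        have hGf : G' f₀ = ∑ c, gvAux dst cap (insert f₀ S) c := rfl
        rw [← hGf] at h
        have h5 : (G - D) * cost f₀ / k * k = (G - D) * cost f₀ := div_mul_cancel₀ _ hk'
        nlinarith [hk]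
      exact mul_lt_mul_of_pos_left h2 hf₀pos
    have hsum : ∑ f, x f * (k * (G - G' f)) < ∑ f, x f * (cost f * (G - D)) :=
      Finset.sum_lt_sum (fun f _ => hWle f) ⟨f₀, Finset.mem_univ _, hstrict⟩
    have heq1 : ∑ f, x f * (k * (G - G' f)) = k * ∑ f, x f * (G - G' f) := by
      rw [Finset.mul_sum]; exact Finset.sum_congr rfl (fun f _ => by ring)
    have heq2 : ∑ f, x f * (cost f * (G - D)) = (∑ f, x f * cost f) * (G - D) := by
      rw [Finset.sum_mul]; exact Finset.sum_congr rfl (fun f _ => by ring)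
    rw [heq1, heq2] at hsum
    have h3 : (∑ f, x f * cost f) * (G - D) ≤ k * (G - D) :=
      mul_le_mul_of_nonneg_right hkx hES.le
    have h4 : k * (G - D) ≤ k * ∑ f, x f * (G - G' f) :=
      mul_le_mul_of_nonneg_left keysum hk.le
    linarith

end

lemma greedyLemma {F : Type*} [Fintype F] [DecidableEq F]
    (cost : F → ℝ) (hcost : ∀ f, 0 ≤ cost f) (M k t : ℝ)
    (hM : ∀ f, cost f ≤ M) (hk : 0 < k) (ht : 0 < t)
    (E : Finset F → ℝ) (hE0 : t ≤ E ∅)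
    (step : ∀ S : Finset F, 0 < E S →
      ∃ f ∉ S, E (insert f S) ≤ E S * (1 - cost f / k)) :
    ∃ S : Finset F, E S < t ∧ ∑ f ∈ S, cost f ≤ k * Real.log (E ∅ / t) + M := by
  have hE0pos : 0 < E ∅ := ht.trans_le hE0
  suffices h : ∀ m : ℕ, ∀ S : Finset F, (Finset.univ \ S).card ≤ m → t ≤ E S →
      ∑ f ∈ S, cost f ≤ k * Real.log (E ∅ / E S) →
      ∃ S' : Finset F, E S' < t ∧ ∑ f ∈ S', cost f ≤ k * Real.log (E ∅ / t) + M by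
    refine h (Finset.univ \ (∅ : Finset F)).card ∅ le_rfl hE0 ?_
    rw [Finset.sum_empty, div_self (ne_of_gt hE0pos), Real.log_one, mul_zero]
  intro m
  induction m with
  | zero =>
    intro S hcard hES hinv
    obtain ⟨f, hfS, _⟩ := step S (ht.trans_le hES)
    exfalso
    have : f ∈ Finset.univ \ S := Finset.mem_sdiff.2 ⟨Finset.mem_univ _, hfS⟩
    have := Finset.card_pos.2 ⟨f, this⟩
    omega
  | succ m ih =>
    intro S hcard hES hinv
    have hESpos : 0 < E S := ht.trans_le hES
    obtain ⟨f, hfS, hstep⟩ := step S hESpos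
    have hcard' : (Finset.univ \ insert f S).card ≤ m := by
      have h1 : Finset.univ \ insert f S = (Finset.univ \ S).erase f := by
        ext g; simp [Finset.mem_sdiff, Finset.mem_erase, Finset.mem_insert]
      have h2 : f ∈ Finset.univ \ S := Finset.mem_sdiff.2 ⟨Finset.mem_univ _, hfS⟩
      rw [h1, Finset.card_erase_of_mem h2]
      omega
    by_cases hE' : E (insert f S) < t
    · refine ⟨insert f S, hE', ?_⟩
      rw [Finset.sum_insert hfS]
      have hlog : Real.log (E ∅ / E S) ≤ Real.log (E ∅ / t) := by
        exact Real.log_le_log (by positivity) (div_le_div_of_nonneg_left hE0pos.le ht hES)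
      have := hM f
      nlinarith [hk.le]
    · push_neg at hE'
      have hE'pos : 0 < E (insert f S) := ht.trans_le hE'
      refine ih (insert f S) hcard' hE' ?_
      rw [Finset.sum_insert hfS]
      have hexp : (1 : ℝ) - cost f / k ≤ Real.exp (-(cost f / k)) := by
        have := Real.add_one_le_exp (-(cost f / k))
        linarith
      have h1 : E (insert f S) ≤ E S * Real.exp (-(cost f / k)) :=
        le_trans hstep (mul_le_mul_of_nonneg_left hexp hESpos.le)
      have h2 : Real.log (E (insert f S)) ≤ Real.log (E S) - cost f / k := by
        have := Real.log_le_log hE'pos h1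
        rwa [Real.log_mul (ne_of_gt hESpos) (Real.exp_ne_zero _), Real.log_exp] at this
      have h3 : cost f ≤ k * (Real.log (E S) - Real.log (E (insert f S))) := by
        have := mul_le_mul_of_nonneg_left (by linarith : cost f / k ≤ Real.log (E S) - Real.log (E (insert f S))) hk.le
        rwa [mul_div_cancel₀ _ (ne_of_gt hk)] at this
      have h4 : Real.log (E ∅ / E S) = Real.log (E ∅) - Real.log (E S) :=
        Real.log_div (ne_of_gt hE0pos) (ne_of_gt hESpos)
      have h5 : Real.log (E ∅ / E (insert f S)) = Real.log (E ∅) - Real.log (E (insert f S)) :=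
        Real.log_div (ne_of_gt hE0pos) (ne_of_gt hE'pos)
      rw [h5]; rw [h4] at hinv
      nlinarith [hk.le]



/-- **Weighted k-medians rounding guarantee (existence form).**
If a facility-location instance with `n ≥ 1` customers admits a fractional
solution of facility cost at most `k` and assignment cost at most `d`, then for
any `ε > 0` there is a nonempty set `S` of facilities with assignment cost at
most `(1+ε)·d` and facility cost at most `k·ln(n + n/ε) + max_f cost(f)`. -/
theorem weighted_k_medians_rounding_guarantee
    {F C : Type*} [Fintype F] [Fintype C] [Nonempty C]
    (cost : F → ℝ) (hcost : ∀ f, 0 ≤ cost f)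
    (dist : F → C → ℝ) (hdist : ∀ f c, 0 ≤ dist f c)
    (ε d k : ℝ) (hε : 0 < ε) (hd : 0 ≤ d) (hk : 0 < k)
    (hfrac : ∃ (x : F → ℝ) (xa : F → C → ℝ),
      (∀ f, x f ∈ Set.Icc (0 : ℝ) 1) ∧
      (∀ f c, 0 ≤ xa f c) ∧
      (∀ f c, xa f c ≤ x f) ∧
      (∀ c, ∑ f, xa f c = 1) ∧
      (∑ f, x f * cost f ≤ k) ∧
      (∑ f, ∑ c, xa f c * dist f c ≤ d)) :
    ∃ (S : Finset F) (hS : S.Nonempty),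
      (∑ c, S.inf' hS fun f => dist f c) ≤ (1 + ε) * d ∧
      (∑ f ∈ S, cost f) ≤
        k * Real.log ((Fintype.card C : ℝ) + (Fintype.card C : ℝ) / ε) +
          ⨆ f : F, cost f := by

  classical
  obtain ⟨x, xa, hx01, hxa0, hxle, hxsum, hkx, hdx⟩ := hfrac
  have hx0 : ∀ f, 0 ≤ x f := fun f => (hx01 f).1
  have hFne : Nonempty F := by
    by_contra h
    rw [not_nonempty_iff] at h
    have c0 := Classical.arbitrary C
    have h1 := hxsum c0
    rw [Finset.univ_eq_empty, Finset.sum_empty] at h1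
    norm_num at h1
  have hMle : ∀ f, cost f ≤ ⨆ f : F, cost f := fun f =>
    le_ciSup (Set.Finite.bddAbove (Set.finite_range cost)) f
  have hn1 : (1 : ℝ) ≤ (Fintype.card C : ℝ) := by exact_mod_cast Fintype.card_pos
  have hε1 : (0 : ℝ) < 1 + ε := by linarith
  rcases hd.lt_or_eq with hdpos | hdzero
  · -- case d > 0
    set cap : ℝ := (1 + ε) * d with hcapdef
    have hcap0 : 0 ≤ cap := by positivity
    have hD : (∑ c, ∑ f, xa f c * dist f c) ≤ d := by rw [Finset.sum_comm]; exact hdx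
    have hD0 : 0 ≤ ∑ c, ∑ f, xa f c * dist f c :=
      Finset.sum_nonneg fun c _ => Finset.sum_nonneg fun f _ =>
        mul_nonneg (hxa0 f c) (hdist f c)
    have ht : 0 < ε * d := by positivity
    have hEempty : (∑ c, gvAux dist cap (∅ : Finset F) c) - (∑ c, ∑ f, xa f c * dist f c)
        = (Fintype.card C : ℝ) * cap - (∑ c, ∑ f, xa f c * dist f c) := by
      simp [gvAux_empty, Finset.sum_const, nsmul_eq_mul]
    have hE0 : ε * d ≤ (∑ c, gvAux dist cap (∅ : Finset F) c)
        - (∑ c, ∑ f, xa f c * dist f c) := by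
      rw [hEempty, hcapdef]; nlinarith
    obtain ⟨S, hSE, hScost⟩ := greedyLemma cost hcost (⨆ f : F, cost f) k (ε * d)
      hMle hk ht
      (fun S => (∑ c, gvAux dist cap S c) - (∑ c, ∑ f, xa f c * dist f c)) hE0
      (fun S hS => stepExists cost hcost dist cap k hk x xa hx0 hxa0 hxle hxsum hkx S hS)
    have hsumgv : ∑ c, gvAux dist cap S c < ε * d + ∑ c, ∑ f, xa f c * dist f c := by
      linarith [hSE]
    have hserved : ∀ c, ∃ f ∈ S, dist f c < cap := by
      intro c
      by_contra hcon
      push_neg at hcon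
      have h1 : gvAux dist cap S c = cap := gvAux_eq_cap hcon
      have h2 : gvAux dist cap S c ≤ ∑ c', gvAux dist cap S c' :=
        Finset.single_le_sum (fun c' _ => gvAux_nonneg hcap0 hdist S c') (Finset.mem_univ c)
      rw [h1, hcapdef] at h2
      nlinarith
    obtain ⟨c₀⟩ := ‹Nonempty C›
    obtain ⟨f₀, hf₀, _⟩ := hserved c₀
    have hSne : S.Nonempty := ⟨f₀, hf₀⟩
    refine ⟨S, hSne, ?_, ?_⟩
    · have heq : ∀ c, S.inf' hSne (fun f => dist f c) = gvAux dist cap S c := by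
        intro c
        obtain ⟨f, hf, hflt⟩ := hserved c
        exact (gvAux_eq_inf' hSne hf hflt).symm
      calc ∑ c, S.inf' hSne (fun f => dist f c) = ∑ c, gvAux dist cap S c :=
            Finset.sum_congr rfl fun c _ => heq c
        _ ≤ (1 + ε) * d := by nlinarith
    · have hE0pos : 0 < (∑ c, gvAux dist cap (∅ : Finset F) c)
          - (∑ c, ∑ f, xa f c * dist f c) := ht.trans_le hE0
      have hlog : Real.log (((∑ c, gvAux dist cap (∅ : Finset F) c)
            - (∑ c, ∑ f, xa f c * dist f c)) / (ε * d))
          ≤ Real.log ((Fintype.card C : ℝ) + (Fintype.card C : ℝ) / ε) := by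
        apply Real.log_le_log (div_pos hE0pos ht)
        rw [hEempty, div_le_iff₀ ht]
        have hrw : ((Fintype.card C : ℝ) + (Fintype.card C : ℝ) / ε) * (ε * d)
            = (Fintype.card C : ℝ) * ((1 + ε) * d) := by
          field_simp; ring
        rw [hrw, hcapdef]
        nlinarith
      calc ∑ f ∈ S, cost f
          ≤ k * Real.log (((∑ c, gvAux dist cap (∅ : Finset F) c)
              - (∑ c, ∑ f, xa f c * dist f c)) / (ε * d)) + ⨆ f : F, cost f := hScost
        _ ≤ k * Real.log ((Fintype.card C : ℝ) + (Fintype.card C : ℝ) / ε)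
              + ⨆ f : F, cost f := by nlinarith
  · -- case d = 0
    have hd0 : d = 0 := hdzero.symm
    subst hd0
    set dst : F → C → ℝ := fun f c => if dist f c = 0 then 0 else 1 with hdstdef
    have hdst0 : ∀ f c, 0 ≤ dst f c := by
      intro f c; rw [hdstdef]; dsimp only; split <;> norm_num
    have hzero : ∀ f c, xa f c * dist f c = 0 := by
      have hsum0 : ∑ f, ∑ c, xa f c * dist f c = 0 :=
        le_antisymm hdx (Finset.sum_nonneg fun f _ => Finset.sum_nonneg fun c _ =>
          mul_nonneg (hxa0 f c) (hdist f c))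
      intro f c
      have h1 := (Finset.sum_eq_zero_iff_of_nonneg (fun f _ =>
        Finset.sum_nonneg fun c _ => mul_nonneg (hxa0 f c) (hdist f c))).1 hsum0 f
        (Finset.mem_univ f)
      exact (Finset.sum_eq_zero_iff_of_nonneg (fun c _ =>
        mul_nonneg (hxa0 f c) (hdist f c))).1 h1 c (Finset.mem_univ c)
    have hD'0 : (∑ c, ∑ f, xa f c * dst f c) = 0 := by
      refine Finset.sum_eq_zero fun c _ => Finset.sum_eq_zero fun f _ => ?_
      by_cases h : dist f c = 0
      · rw [hdstdef]; simp [h]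
      · have : xa f c = 0 := by
          have := hzero f c
          have hdne : dist f c ≠ 0 := h
          exact (mul_eq_zero.1 this).resolve_right hdne
        rw [this, zero_mul]
    have ht : (0 : ℝ) < ε / (1 + ε) := by positivity
    have htlt1 : ε / (1 + ε) < 1 := (div_lt_one hε1).2 (by linarith)
    have hEempty : (∑ c, gvAux dst 1 (∅ : Finset F) c) - (∑ c, ∑ f, xa f c * dst f c)
        = (Fintype.card C : ℝ) := by
      rw [hD'0]; simp [gvAux_empty, Finset.sum_const, nsmul_eq_mul]
    have hE0 : ε / (1 + ε) ≤ (∑ c, gvAux dst 1 (∅ : Finset F) c)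
        - (∑ c, ∑ f, xa f c * dst f c) := by
      rw [hEempty]; linarith
    obtain ⟨S, hSE, hScost⟩ := greedyLemma cost hcost (⨆ f : F, cost f) k (ε / (1 + ε))
      hMle hk ht
      (fun S => (∑ c, gvAux dst 1 S c) - (∑ c, ∑ f, xa f c * dst f c)) hE0
      (fun S hS => stepExists cost hcost dst 1 k hk x xa hx0 hxa0 hxle hxsum hkx S hS)
    have hsumgv : ∑ c, gvAux dst 1 S c < 1 := by
      rw [hD'0] at hSE; linarith
    have hserved : ∀ c, ∃ f ∈ S, dist f c = 0 := by
      intro c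
      by_contra hcon
      push_neg at hcon
      have h1 : gvAux dst 1 S c = 1 := by
        refine gvAux_eq_cap fun f hf => ?_
        have := hcon f hf
        rw [hdstdef]; simp [this]
      have h2 : gvAux dst 1 S c ≤ ∑ c', gvAux dst 1 S c' :=
        Finset.single_le_sum (fun c' _ => gvAux_nonneg zero_le_one hdst0 S c')
          (Finset.mem_univ c)
      rw [h1] at h2
      linarith
    obtain ⟨c₀⟩ := ‹Nonempty C›
    obtain ⟨f₀, hf₀, _⟩ := hserved c₀
    have hSne : S.Nonempty := ⟨f₀, hf₀⟩
    refine ⟨S, hSne, ?_, ?_⟩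
    · have heq : ∀ c, S.inf' hSne (fun f => dist f c) = 0 := by
        intro c
        obtain ⟨f, hf, hf0⟩ := hserved c
        refine le_antisymm ?_ (Finset.le_inf' hSne _ fun g _ => hdist g c)
        calc S.inf' hSne (fun f => dist f c) ≤ dist f c := Finset.inf'_le _ hf
          _ = 0 := hf0
      rw [Finset.sum_congr rfl fun c _ => heq c]
      simp
    · have harg : ((∑ c, gvAux dst 1 (∅ : Finset F) c) - (∑ c, ∑ f, xa f c * dst f c))
          / (ε / (1 + ε))
          = (Fintype.card C : ℝ) + (Fintype.card C : ℝ) / ε := by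
        rw [hEempty]
        field_simp
        ring
      rw [harg] at hScost
      exact hScost
end

section
/- Fractional k-medians sparsification (existence form of the rounding guarantee): Consider an unweighted k-medians instance with a finite set F of facilities, a finite nonempty set C of n customers, distances dist : F × C → ℝ≥0, and cost(f) = 1 for every facility. Let 0 < ε < 1, let k be a positive integer, d ≥ 0, and suppose there exists a fractional solution x* with Σ_f x*(f) ≤ k and assignment cost dist(x*) ≤ d. Let N ≥ ln(n/ε)/chern(−ε) be such that N·k is an integer. Then there exist nonnegative reals x̂(f) and x̂(f,c), each an integer multiple of 1/((1−ε)·N), satisfying x̂(f,c) ≤ x̂(f) for all f, c and Σ_f x̂(f,c) ≥ 1 for every customer c, with Σ_f x̂(f) ≤ (1−ε)^{-1}·k and Σ_{f,c} x̂(f,c)·dist(f,c) ≤ (1−ε)^{-2}·d. -/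
open Finset

private lemma sum_pi_prod' {ι S : Type*} [Fintype ι] [DecidableEq ι] [Fintype S]
    (h : ι → S → ℝ) :
    ∑ ω : ι → S, ∏ i, h i (ω i) = ∏ i, ∑ s, h i s := by
  rw [Finset.prod_univ_sum, Fintype.piFinset_univ]

private lemma chern_neg_pos' {ε : ℝ} (h0 : 0 < ε) (h1 : ε < 1) : 0 < chern (-ε) := by
  have hp : (0:ℝ) < 1 - ε := by linarith
  have h2 : Real.log (1-ε)⁻¹ < (1-ε)⁻¹ - 1 :=
    Real.log_lt_sub_one_of_pos (by positivity) (by intro h; rw [inv_eq_one] at h; linarith)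
  rw [Real.log_inv] at h2
  have h3 : (1-ε)⁻¹ - 1 = ε / (1-ε) := by field_simp; ring
  rw [h3] at h2
  have := mul_lt_mul_of_pos_left h2 hp
  rw [mul_div_cancel₀ _ (by linarith : (1:ℝ) - ε ≠ 0)] at this
  unfold chern
  have : -((1-ε) * Real.log (1-ε)) < ε := by linarith
  rw [show (1:ℝ) + -ε = 1 - ε by ring]
  linarith

/-- **Fractional k-medians sparsification (existence form).**
For an unweighted k-medians instance (every facility has cost 1) with `n ≥ 1`
customers admitting a fractional solution `x*` with `Σ_f x*(f) ≤ k` and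
assignment cost at most `d`, and any `N ≥ ln(n/ε)/chern(−ε)` with `N·k` an
integer, there is a fractional cover `(xh, xha)` whose values are integer
multiples of `1/((1−ε)·N)`, with `Σ_f xh(f) ≤ (1−ε)⁻¹·k` and assignment cost
at most `(1−ε)⁻²·d`. -/
theorem fractional_k_medians_sparsification
    {F C : Type*} [Fintype F] [Fintype C] [Nonempty C]
    (dist : F → C → ℝ) (hdist : ∀ f c, 0 ≤ dist f c)
    (ε : ℝ) (hε0 : 0 < ε) (hε1 : ε < 1)
    (k : ℕ) (hk : 0 < k) (d : ℝ) (hd : 0 ≤ d)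
    (hfrac : ∃ (x : F → ℝ) (xa : F → C → ℝ),
      (∀ f, 0 ≤ x f) ∧
      (∀ f c, 0 ≤ xa f c) ∧
      (∀ f c, xa f c ≤ x f) ∧
      (∀ c, ∑ f, xa f c = 1) ∧
      (∑ f, x f ≤ (k : ℝ)) ∧
      (∑ f, ∑ c, xa f c * dist f c ≤ d))
    (N : ℝ)
    (hN : Real.log ((Fintype.card C : ℝ) / ε) / chern (-ε) ≤ N)
    (hNk : ∃ z : ℤ, N * (k : ℝ) = (z : ℝ)) :
    ∃ (xh : F → ℝ) (xha : F → C → ℝ),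
      (∀ f, 0 ≤ xh f ∧ ∃ z : ℤ, xh f = (z : ℝ) / ((1 - ε) * N)) ∧
      (∀ f c, 0 ≤ xha f c ∧ ∃ z : ℤ, xha f c = (z : ℝ) / ((1 - ε) * N)) ∧
      (∀ f c, xha f c ≤ xh f) ∧
      (∀ c, 1 ≤ ∑ f, xha f c) ∧
      (∑ f, xh f ≤ (1 - ε)⁻¹ * (k : ℝ)) ∧
      (∑ f, ∑ c, xha f c * dist f c ≤ ((1 - ε)⁻¹) ^ 2 * d) := by
  classical
  obtain ⟨x, xa, hx0, hxa0, hxax, hxa1, hxk, hxd⟩ := hfrac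
  have hn : (1:ℝ) ≤ (Fintype.card C : ℝ) := by
    exact_mod_cast Nat.one_le_iff_ne_zero.mpr (Fintype.card_ne_zero)
  have hk0 : (0:ℝ) < k := by exact_mod_cast hk
  have hk1 : (1:ℝ) ≤ k := by exact_mod_cast hk
  have hθ0 : (0:ℝ) < 1 - ε := by linarith
  have hθ1 : (1:ℝ) - ε < 1 := by linarith
  have hchern : 0 < chern (-ε) := chern_neg_pos' hε0 hε1
  have hlogpos : 0 < Real.log ((Fintype.card C : ℝ) / ε) := by
    apply Real.log_pos
    rw [lt_div_iff₀ hε0]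
    linarith
  have hN0 : 0 < N := lt_of_lt_of_le (div_pos hlogpos hchern) hN
  obtain ⟨Z, hZ⟩ := hNk
  have hZ0 : (0:ℤ) ≤ Z := by
    have h : (0:ℝ) < N * k := mul_pos hN0 hk0
    rw [hZ] at h; exact_mod_cast h.le
  set T := Z.toNat with hTdef
  have hT : (T:ℝ) = N * k := by
    rw [hZ, hTdef]
    exact_mod_cast Int.toNat_of_nonneg hZ0
  set M := (1 - ε) * N with hMdef
  have hM0 : 0 < M := mul_pos hθ0 hN0
  -- probability model
  set P : Option F → ℝ := fun s => Option.elim s (1 - (∑ f, x f)/k) (fun f => x f / k) with hPdef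
  set A : Option F → C → ℝ :=
    fun s c => Option.elim s 0 (fun f => if x f = 0 then 0 else xa f c / x f) with hAdef
  set D : Option F → C → ℝ := fun s c => Option.elim s 0 (fun f => dist f c) with hDdef
  set coin : Option F → C → Bool → ℝ :=
    fun s c b => if b then A s c else 1 - A s c with hcoindef
  set q : Option F × (C → Bool) → ℝ :=
    fun sa => P sa.1 * ∏ c, coin sa.1 c (sa.2 c) with hqdef
  set β : Option F × (C → Bool) → C → ℝ :=
    fun sa c => if sa.1.isSome ∧ sa.2 c then 1 else 0 with hβdef
  set ψ : Option F × (C → Bool) → ℝ := fun sa => ∑ c, β sa c * D sa.1 c with hψdef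
  set p : (Fin T → Option F × (C → Bool)) → ℝ := fun ω => ∏ t, q (ω t) with hpdef
  set Xc : (Fin T → Option F × (C → Bool)) → C → ℕ :=
    fun ω c => (univ.filter (fun t => (ω t).1.isSome ∧ (ω t).2 c)).card with hXcdef
  set costΩ : (Fin T → Option F × (C → Bool)) → ℝ := fun ω => ∑ t, ψ (ω t) with hcostdef
  -- basic nonnegativity
  have hA0 : ∀ s c, 0 ≤ A s c := by
    rintro (_|f) c
    · simp [hAdef]
    · simp only [hAdef, Option.elim]
      split
      · exact le_rfl
      · exact div_nonneg (hxa0 f c) (hx0 f)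
  have hA1 : ∀ s c, A s c ≤ 1 := by
    rintro (_|f) c
    · simp [hAdef]
    · simp only [hAdef, Option.elim]
      split
      · exact zero_le_one
      · rename_i hf
        rw [div_le_one (lt_of_le_of_ne (hx0 f) (Ne.symm hf))]
        exact hxax f c
  have hP0 : ∀ s, 0 ≤ P s := by
    rintro (_|f)
    · simp only [hPdef, Option.elim]
      rw [sub_nonneg, div_le_one hk0]
      exact hxk
    · exact div_nonneg (hx0 f) hk0.le
  have hcoin0 : ∀ s c b, 0 ≤ coin s c b := by
    intro s c b
    simp only [hcoindef]
    split
    · exact hA0 s c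
    · linarith [hA1 s c]
  have hq0 : ∀ sa, 0 ≤ q sa := by
    intro sa
    exact mul_nonneg (hP0 _) (Finset.prod_nonneg fun c _ => hcoin0 _ _ _)
  have hp0 : ∀ ω, 0 ≤ p ω := fun ω => Finset.prod_nonneg fun t _ => hq0 _
  have hβ0 : ∀ sa c, 0 ≤ β sa c := by
    intro sa c; simp only [hβdef]; split <;> norm_num
  have hD0 : ∀ s c, 0 ≤ D s c := by
    rintro (_|f) c
    · simp [hDdef]
    · exact hdist f c
  have hψ0 : ∀ sa, 0 ≤ ψ sa :=
    fun sa => Finset.sum_nonneg fun c _ => mul_nonneg (hβ0 _ _) (hD0 _ _)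
  have hcost0 : ∀ ω, 0 ≤ costΩ ω := fun ω => Finset.sum_nonneg fun t _ => hψ0 _
  -- coin marginals
  have hcoinsum : ∀ s, ∑ a : C → Bool, ∏ c, coin s c (a c) = 1 := by
    intro s
    rw [sum_pi_prod' (fun c b => coin s c b)]
    have h1 : ∀ c : C, coin s c true + coin s c false = 1 := by
      intro c
      simp only [hcoindef]
      norm_num
    simp [Fintype.sum_bool, h1]
  -- weighted coin marginal
  have hind : ∀ s c, ∑ a : C → Bool,
      (∏ c', coin s c' (a c')) * (if a c then (1:ℝ) else 0) = A s c := by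
    intro s c
    have hrw : ∀ a : C → Bool, (∏ c', coin s c' (a c')) * (if a c then (1:ℝ) else 0)
        = ∏ c', (coin s c' (a c') * (if c' = c then (if a c' then (1:ℝ) else 0) else 1)) := by
      intro a
      rw [Finset.prod_mul_distrib, Finset.prod_ite_eq' univ c
        (fun c' => (if a c' then (1:ℝ) else 0))]
      simp
    simp_rw [hrw]
    rw [sum_pi_prod' (fun c' b => coin s c' b * (if c' = c then (if b then (1:ℝ) else 0) else 1))]
    have hfac : ∀ c' : C, (∑ b, coin s c' b * (if c' = c then (if b then (1:ℝ) else 0) else 1))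
        = if c' = c then A s c' else 1 := by
      intro c'
      rw [Fintype.sum_bool]
      by_cases h : c' = c <;> simp [h, hcoindef] <;> ring
    simp_rw [hfac]
    rw [Finset.prod_ite_eq' univ c (fun c' => A s c')]
    simp
  -- per-trial expectations
  have hP1 : ∑ s, P s = 1 := by
    rw [Fintype.sum_option]
    simp only [hPdef, Option.elim]
    rw [← Finset.sum_div]
    field_simp
    ring
  have E1 : ∑ sa : Option F × (C → Bool), q sa = 1 := by
    rw [Fintype.sum_prod_type]
    have : ∀ s : Option F, ∑ a : C → Bool, q (s, a) = P s := by
      intro s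
      simp only [hqdef]
      rw [← Finset.mul_sum, hcoinsum s, mul_one]
    simp_rw [this]
    exact hP1
  have hE : ∀ (c : C) (W : Option F → ℝ),
      (∑ sa : Option F × (C → Bool), q sa * (β sa c * W sa.1))
        = (∑ f, xa f c * W (some f)) / k := by
    intro c W
    rw [Fintype.sum_prod_type]
    have hstep : ∀ s : Option F, ∑ a : C → Bool, q (s, a) * (β (s, a) c * W s)
        = P s * A s c * W s * (if s.isSome then (1:ℝ) else 0) := by
      intro s
      have hβrw : ∀ a : C → Bool, β (s, a) c
          = (if s.isSome then (1:ℝ) else 0) * (if a c then (1:ℝ) else 0) := by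
        intro a
        simp only [hβdef]
        by_cases h1 : s.isSome <;> by_cases h2 : a c <;> simp [h1, h2]
      simp only [hqdef, hβrw]
      calc ∑ a : C → Bool, P s * (∏ c', coin s c' (a c')) *
              ((if s.isSome then (1:ℝ) else 0) * (if a c then (1:ℝ) else 0) * W s)
          = (P s * W s * (if s.isSome then (1:ℝ) else 0)) *
              ∑ a : C → Bool, (∏ c', coin s c' (a c')) * (if a c then (1:ℝ) else 0) := by
            rw [Finset.mul_sum]
            exact Finset.sum_congr rfl fun a _ => by ring
        _ = P s * A s c * W s * (if s.isSome then (1:ℝ) else 0) := by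
            rw [hind s c]; ring
    simp_rw [hstep]
    rw [Fintype.sum_option]
    simp only [Option.isSome_none, Option.isSome_some, Bool.false_eq_true, if_false, if_true,
      mul_zero, mul_one, zero_add, eq_self_iff_true]
    have hterm : ∀ f : F, P (some f) * A (some f) c * W (some f)
        = xa f c * W (some f) / k := by
      intro f
      simp only [hPdef, hAdef, Option.elim]
      by_cases hf : x f = 0
      · have : xa f c = 0 := le_antisymm (hf ▸ hxax f c) (hxa0 f c)
        simp [hf, this]
      · rw [if_neg hf]
        field_simp
    simp_rw [hterm]
    rw [← Finset.sum_div]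
  have E2 : ∀ c : C, ∑ sa : Option F × (C → Bool), q sa * β sa c = 1 / k := by
    intro c
    have := hE c (fun _ => 1)
    simp only [mul_one] at this
    rw [this, hxa1 c]
  have E3 : ∀ c : C, ∑ sa : Option F × (C → Bool),
      q sa * (if sa.1.isSome ∧ sa.2 c then (1 - ε : ℝ) else 1) = 1 - ε / k := by
    intro c
    have hrw : ∀ sa : Option F × (C → Bool),
        q sa * (if sa.1.isSome ∧ sa.2 c then (1 - ε : ℝ) else 1)
          = q sa + (-ε) * (q sa * β sa c) := by
      intro sa
      simp only [hβdef]
      by_cases h : sa.1.isSome ∧ sa.2 c <;> simp [h] <;> ring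
    simp_rw [hrw]
    rw [Finset.sum_add_distrib, E1, ← Finset.mul_sum, E2 c]
    ring
  have E4 : ∑ sa : Option F × (C → Bool), q sa * ψ sa ≤ d / k := by
    have hrw : ∀ sa : Option F × (C → Bool), q sa * ψ sa
        = ∑ c, q sa * (β sa c * D sa.1 c) := by
      intro sa
      simp only [hψdef]
      rw [Finset.mul_sum]
    simp_rw [hrw]
    rw [Finset.sum_comm]
    have hc : ∀ c : C, ∑ sa : Option F × (C → Bool), q sa * (β sa c * D sa.1 c)
        = (∑ f, xa f c * dist f c) / k := by
      intro c
      rw [hE c (fun s => D s c)]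
      simp [hDdef]
    simp_rw [hc]
    rw [← Finset.sum_div]
    rw [Finset.sum_comm] at hxd
    exact (div_le_div_iff_of_pos_right hk0).mpr hxd
  -- Omega-level
  have hp1 : ∑ ω : Fin T → Option F × (C → Bool), p ω = 1 := by
    simp only [hpdef]
    rw [sum_pi_prod' (fun _ s => q s)]
    simp [E1]
  have hmgf : ∀ c : C, ∑ ω : Fin T → Option F × (C → Bool),
      p ω * (1 - ε) ^ (Xc ω c) = (1 - ε / k) ^ T := by
    intro c
    have hfac : ∀ ω : Fin T → Option F × (C → Bool),
        p ω * (1 - ε) ^ (Xc ω c)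
          = ∏ t, (q (ω t) * (if ((ω t).1.isSome ∧ (ω t).2 c) then (1 - ε : ℝ) else 1)) := by
      intro ω
      rw [Finset.prod_mul_distrib]
      simp only [hpdef, hXcdef]
      congr 1
      rw [Finset.prod_ite, Finset.prod_const, Finset.prod_const_one, mul_one]
    simp_rw [hfac]
    rw [sum_pi_prod' (fun _ s => q s * (if (s.1.isSome ∧ s.2 c) then (1 - ε : ℝ) else 1))]
    rw [Finset.prod_const, E3 c, Finset.card_univ, Fintype.card_fin]
  have hcostE : ∑ ω : Fin T → Option F × (C → Bool), p ω * costΩ ω ≤ N * d := by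
    have hsw : ∑ ω : Fin T → Option F × (C → Bool), p ω * costΩ ω
        = ∑ t : Fin T, ∑ ω : Fin T → Option F × (C → Bool), p ω * ψ (ω t) := by
      simp only [hcostdef, Finset.mul_sum]
      exact Finset.sum_comm
    have hmarg : ∀ t : Fin T, ∑ ω : Fin T → Option F × (C → Bool), p ω * ψ (ω t)
        = ∑ sa : Option F × (C → Bool), q sa * ψ sa := by
      intro t
      have hfac : ∀ ω : Fin T → Option F × (C → Bool), p ω * ψ (ω t)
          = ∏ u, (q (ω u) * (if u = t then ψ (ω u) else 1)) := by
        intro ω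
        rw [Finset.prod_mul_distrib]
        simp only [hpdef]
        congr 1
        rw [Finset.prod_ite_eq' univ t (fun u => ψ (ω u))]
        simp
      simp_rw [hfac]
      rw [sum_pi_prod' (fun u s => q s * (if u = t then ψ s else 1))]
      have hone : ∀ u : Fin T, (∑ s : Option F × (C → Bool), q s * (if u = t then ψ s else 1))
          = if u = t then ∑ s : Option F × (C → Bool), q s * ψ s else 1 := by
        intro u
        by_cases h : u = t <;> simp [h, E1]
      simp_rw [hone]
      rw [Finset.prod_ite_eq' univ t (fun _ => ∑ s : Option F × (C → Bool), q s * ψ s)]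
      simp
    rw [hsw]
    simp_rw [hmarg]
    rw [Finset.sum_const, Finset.card_univ, Fintype.card_fin, nsmul_eq_mul]
    calc (T:ℝ) * ∑ sa : Option F × (C → Bool), q sa * ψ sa
        ≤ (T:ℝ) * (d / k) := by
          apply mul_le_mul_of_nonneg_left E4 (by positivity)
      _ = N * d := by rw [hT]; field_simp
  -- Chernoff bound per customer
  have hbadc : ∀ c : C,
      ∑ ω ∈ univ.filter (fun ω : Fin T → Option F × (C → Bool) => ((Xc ω c : ℝ) < M)), p ω
        ≤ ε / (Fintype.card C : ℝ) := by
    intro c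
    set θM : ℝ := (1 - ε) ^ (M : ℝ) with hθMdef
    have hθM0 : 0 < θM := Real.rpow_pos_of_pos hθ0 M
    have h1 : (∑ ω ∈ univ.filter (fun ω : Fin T → Option F × (C → Bool) =>
        ((Xc ω c : ℝ) < M)), p ω) * θM
        ≤ ∑ ω : Fin T → Option F × (C → Bool), p ω * (1 - ε) ^ (Xc ω c) := by
      rw [Finset.sum_mul]
      refine le_trans (Finset.sum_le_sum ?_) (Finset.sum_le_sum_of_subset_of_nonneg
        (Finset.filter_subset _ _) (fun ω _ _ => mul_nonneg (hp0 ω) (by positivity)))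
      intro ω hω
      rw [Finset.mem_filter] at hω
      refine mul_le_mul_of_nonneg_left ?_ (hp0 ω)
      rw [← Real.rpow_natCast (1 - ε) (Xc ω c)]
      exact Real.rpow_le_rpow_of_exponent_ge hθ0 hθ1.le hω.2.le
    rw [hmgf c] at h1
    have h3 : (1 - ε / k) ^ T ≤ Real.exp (-(ε * N)) := by
      have hle : 1 - ε / k ≤ Real.exp (-(ε / k)) := by
        have := Real.add_one_le_exp (-(ε / k))
        linarith
      have hnn : (0:ℝ) ≤ 1 - ε / k := by
        have : ε / k ≤ ε / 1 := by
          apply div_le_div_of_nonneg_left hε0.le one_pos hk1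
        simp at this
        linarith
      calc (1 - ε / k) ^ T ≤ (Real.exp (-(ε / k))) ^ T := pow_le_pow_left₀ hnn hle T
        _ = Real.exp ((T:ℝ) * (-(ε / k))) := by
            rw [← Real.exp_nat_mul]
        _ = Real.exp (-(ε * N)) := by
            congr 1
            rw [hT]
            field_simp
    have h4 : Real.exp (-(ε * N)) / θM = Real.exp (-(N * chern (-ε))) := by
      rw [hθMdef, Real.rpow_def_of_pos hθ0, ← Real.exp_sub]
      congr 1
      unfold chern
      rw [show (1:ℝ) + -ε = 1 - ε by ring]
      ring
    have h5 : Real.exp (-(N * chern (-ε))) ≤ ε / (Fintype.card C : ℝ) := by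
      have hlog : Real.log ((Fintype.card C : ℝ) / ε) ≤ N * chern (-ε) := by
        rw [div_le_iff₀ hchern] at hN
        linarith [hN]
      calc Real.exp (-(N * chern (-ε))) ≤ Real.exp (-(Real.log ((Fintype.card C : ℝ) / ε))) := by
            apply Real.exp_le_exp.mpr
            linarith
        _ = ε / (Fintype.card C : ℝ) := by
            rw [Real.exp_neg, Real.exp_log (by positivity)]
            rw [inv_div]
    calc ∑ ω ∈ univ.filter (fun ω : Fin T → Option F × (C → Bool) => ((Xc ω c : ℝ) < M)), p ω
        = (∑ ω ∈ univ.filter (fun ω : Fin T → Option F × (C → Bool) =>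
            ((Xc ω c : ℝ) < M)), p ω) * θM / θM := by
          field_simp
      _ ≤ (1 - ε / k) ^ T / θM := (div_le_div_iff_of_pos_right hθM0).mpr h1
      _ ≤ Real.exp (-(ε * N)) / θM := (div_le_div_iff_of_pos_right hθM0).mpr h3
      _ = Real.exp (-(N * chern (-ε))) := h4
      _ ≤ ε / (Fintype.card C : ℝ) := h5
  -- union bound
  set Good : Finset (Fin T → Option F × (C → Bool)) :=
    univ.filter (fun ω => ∀ c, M ≤ (Xc ω c : ℝ)) with hGooddef
  have hGoodP : 1 - ε ≤ ∑ ω ∈ Good, p ω := by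
    have hsplit := Finset.sum_filter_add_sum_filter_not univ
      (fun ω : Fin T → Option F × (C → Bool) => ∀ c, M ≤ (Xc ω c : ℝ)) p
    rw [hp1] at hsplit
    have hbad : ∑ ω ∈ univ.filter (fun ω : Fin T → Option F × (C → Bool) =>
        ¬ ∀ c, M ≤ (Xc ω c : ℝ)), p ω ≤ ε := by
      have hstep1 : ∀ ω ∈ univ.filter (fun ω : Fin T → Option F × (C → Bool) =>
          ¬ ∀ c, M ≤ (Xc ω c : ℝ)), p ω ≤ ∑ c, (if ((Xc ω c : ℝ) < M) then p ω else 0) := by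
        intro ω hω
        rw [Finset.mem_filter] at hω
        push_neg at hω
        obtain ⟨c0, hc0⟩ := hω.2
        have : (if ((Xc ω c0 : ℝ) < M) then p ω else 0) = p ω := if_pos hc0
        calc p ω = (if ((Xc ω c0 : ℝ) < M) then p ω else 0) := this.symm
          _ ≤ ∑ c, (if ((Xc ω c : ℝ) < M) then p ω else 0) :=
              Finset.single_le_sum (f := fun c => (if ((Xc ω c : ℝ) < M) then p ω else 0))
                (fun c _ => by by_cases h : ((Xc ω c : ℝ) < M) <;> simp [h, hp0 ω])
                (Finset.mem_univ c0)
      calc ∑ ω ∈ univ.filter (fun ω : Fin T → Option F × (C → Bool) =>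
            ¬ ∀ c, M ≤ (Xc ω c : ℝ)), p ω
          ≤ ∑ ω ∈ univ.filter (fun ω : Fin T → Option F × (C → Bool) =>
            ¬ ∀ c, M ≤ (Xc ω c : ℝ)), ∑ c, (if ((Xc ω c : ℝ) < M) then p ω else 0) :=
            Finset.sum_le_sum hstep1
        _ ≤ ∑ ω : Fin T → Option F × (C → Bool), ∑ c, (if ((Xc ω c : ℝ) < M) then p ω else 0) :=
            Finset.sum_le_sum_of_subset_of_nonneg (Finset.filter_subset _ _)
              (fun ω _ _ => Finset.sum_nonneg fun c _ => by
                by_cases h : ((Xc ω c : ℝ) < M) <;> simp [h, hp0 ω])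
        _ = ∑ c, ∑ ω : Fin T → Option F × (C → Bool), (if ((Xc ω c : ℝ) < M) then p ω else 0) :=
            Finset.sum_comm
        _ = ∑ c, ∑ ω ∈ univ.filter (fun ω : Fin T → Option F × (C → Bool) =>
            ((Xc ω c : ℝ) < M)), p ω := by
            exact Finset.sum_congr rfl fun c _ => (Finset.sum_filter _ _).symm
        _ ≤ ∑ c : C, ε / (Fintype.card C : ℝ) := Finset.sum_le_sum fun c _ => hbadc c
        _ = ε := by
            rw [Finset.sum_const, Finset.card_univ, nsmul_eq_mul]
            field_simp
    linarith
  -- selection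
  have hsel : ∃ ω ∈ Good, costΩ ω ≤ N * d / (1 - ε) := by
    by_contra hcon
    push_neg at hcon
    have hB0 : 0 ≤ N * d / (1 - ε) := by positivity
    have hpos : ∃ ω0 ∈ Good, 0 < p ω0 := by
      by_contra hno
      push_neg at hno
      have : ∑ ω ∈ Good, p ω ≤ 0 := Finset.sum_nonpos fun ω hω => hno ω hω
      linarith
    obtain ⟨ω0, hω0G, hω0p⟩ := hpos
    have hlt : ∑ ω ∈ Good, p ω * (N * d / (1 - ε)) < ∑ ω ∈ Good, p ω * costΩ ω := by
      apply Finset.sum_lt_sum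
      · intro ω hω
        exact mul_le_mul_of_nonneg_left (hcon ω hω).le (hp0 ω)
      · exact ⟨ω0, hω0G, mul_lt_mul_of_pos_left (hcon ω0 hω0G) hω0p⟩
    have h6 : N * d ≤ ∑ ω ∈ Good, p ω * (N * d / (1 - ε)) := by
      rw [← Finset.sum_mul]
      calc N * d = (1 - ε) * (N * d / (1 - ε)) := by field_simp
        _ ≤ (∑ ω ∈ Good, p ω) * (N * d / (1 - ε)) :=
            mul_le_mul_of_nonneg_right (by linarith) hB0
    have h7 : ∑ ω ∈ Good, p ω * costΩ ω ≤ N * d := by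
      refine le_trans (Finset.sum_le_sum_of_subset_of_nonneg (Finset.filter_subset _ _)
        (fun ω _ _ => mul_nonneg (hp0 ω) (hcost0 ω))) hcostE
    linarith
  -- extraction
  obtain ⟨ω, hωmem, hωcost⟩ := hsel
  have hωG : ∀ c, M ≤ (Xc ω c : ℝ) := (Finset.mem_filter.mp hωmem).2
  set z : F → ℕ := fun f => (univ.filter (fun t => (ω t).1 = some f)).card with hzdef
  set w : F → C → ℕ :=
    fun f c => (univ.filter (fun t => (ω t).1 = some f ∧ (ω t).2 c)).card with hwdef
  have hsplitX : ∀ c, ∑ f, w f c = Xc ω c := by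
    intro c
    simp only [hwdef, hXcdef, Finset.card_filter]
    rw [Finset.sum_comm]
    refine Finset.sum_congr rfl fun t _ => ?_
    rcases h : (ω t).1 with _ | f0
    · simp [h]
    · by_cases hc : (ω t).2 c <;> simp [h, hc, Finset.sum_ite_eq]
  have hsumz : ∑ f, z f ≤ T := by
    have : ∑ f, z f = (univ.filter (fun t : Fin T => ((ω t).1).isSome)).card := by
      simp only [hzdef, Finset.card_filter]
      rw [Finset.sum_comm]
      refine Finset.sum_congr rfl fun t _ => ?_
      rcases h : (ω t).1 with _ | f0 <;> simp [h, Finset.sum_ite_eq]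
    rw [this]
    calc (univ.filter (fun t : Fin T => ((ω t).1).isSome)).card
        ≤ (univ : Finset (Fin T)).card := Finset.card_filter_le _ _
      _ = T := by rw [Finset.card_univ, Fintype.card_fin]
  have hwz : ∀ f c, w f c ≤ z f := by
    intro f c
    exact Finset.card_le_card (Finset.monotone_filter_right _ (fun t _ ht => ht.1))
  have hwcast : ∀ f c, (w f c : ℝ)
      = ∑ t, (if (ω t).1 = some f ∧ (ω t).2 c then (1:ℝ) else 0) := by
    intro f c
    simp only [hwdef, Finset.card_filter]
    push_cast
    rfl
  have hcosteq : ∑ f, ∑ c, (w f c : ℝ) * dist f c = costΩ ω := by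
    have hc : ∀ c, ∑ f, (w f c : ℝ) * dist f c = ∑ t, β (ω t) c * D (ω t).1 c := by
      intro c
      have hterm : ∀ f, (w f c : ℝ) * dist f c
          = ∑ t, (if (ω t).1 = some f ∧ (ω t).2 c then dist f c else 0) := by
        intro f
        rw [hwcast f c, Finset.sum_mul]
        refine Finset.sum_congr rfl fun t _ => by split <;> simp
      simp_rw [hterm]
      rw [Finset.sum_comm]
      refine Finset.sum_congr rfl fun t _ => ?_
      rcases h : (ω t).1 with _ | f0
      · simp [h, hβdef, hDdef]
      · by_cases hcb : (ω t).2 c <;> simp [h, hcb, hβdef, hDdef, Finset.sum_ite_eq]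
    calc ∑ f, ∑ c, (w f c : ℝ) * dist f c
        = ∑ c, ∑ f, (w f c : ℝ) * dist f c := Finset.sum_comm
      _ = ∑ c, ∑ t, β (ω t) c * D (ω t).1 c := Finset.sum_congr rfl fun c _ => hc c
      _ = ∑ t, ∑ c, β (ω t) c * D (ω t).1 c := Finset.sum_comm
      _ = costΩ ω := by simp only [hcostdef, hψdef]
  clear_value z w Xc costΩ p q β ψ coin A P D Good M T
  refine ⟨fun f => (z f : ℝ) / M, fun f c => (w f c : ℝ) / M, ?_, ?_, ?_, ?_, ?_, ?_⟩
  · intro f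
    exact ⟨div_nonneg (Nat.cast_nonneg _) hM0.le, ⟨(z f : ℤ), by norm_num⟩⟩
  · intro f c
    exact ⟨div_nonneg (Nat.cast_nonneg _) hM0.le, ⟨(w f c : ℤ), by norm_num⟩⟩
  · intro f c
    refine (div_le_div_iff_of_pos_right hM0).mpr ?_
    exact_mod_cast hwz f c
  · intro c
    rw [← Finset.sum_div, one_le_div hM0]
    calc M ≤ (Xc ω c : ℝ) := hωG c
      _ = ∑ f, (w f c : ℝ) := by rw [← hsplitX c]; push_cast; rfl
  · rw [← Finset.sum_div, div_le_iff₀ hM0]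
    calc (∑ f, (z f : ℝ)) ≤ (T : ℝ) := by exact_mod_cast hsumz
      _ = N * k := hT
      _ = (1 - ε)⁻¹ * k * M := by rw [hMdef]; field_simp
  · simp_rw [div_mul_eq_mul_div, ← Finset.sum_div]
    rw [hcosteq, div_le_iff₀ hM0]
    calc costΩ ω ≤ N * d / (1 - ε) := hωcost
      _ = (1 - ε)⁻¹ ^ 2 * d * M := by rw [hMdef]; field_simp
end

section
/- Fractional facility-location guarantee (existence form): Consider a facility-location instance with a finite set F of facilities, a finite nonempty set C of n customers, costs cost : F → ℝ≥0, and distances dist : F × C → ℝ≥0. Let 0 < ε < 1 and let k, d ≥ 0 be such that there exists a fractional solution x* with facility cost cost(x*) ≤ k and assignment cost dist(x*) ≤ d. Let N ≥ ln(n)/chern(−ε) be such that (1−ε)·N is a positive integer. Then there exist nonnegative reals x̂(f) and x̂(f,c), each an integer multiple of 1/((1−ε)·N), satisfying x̂(f,c) ≤ x̂(f) for all f, c and Σ_f x̂(f,c) ≥ 1 for every customer c, with Σ_f x̂(f)·cost(f) + Σ_{f,c} x̂(f,c)·dist(f,c) ≤ (1−ε)^{-1}·(d + k). -/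
set_option linter.unusedSectionVars false

noncomputable section
open Finset
open scoped Classical

namespace FLaux

/-- Jensen for log. -/
lemma jensen_log {ι : Type*} (s : Finset ι) (p y : ι → ℝ)
    (hp : ∀ i ∈ s, 0 ≤ p i) (hs : ∑ i ∈ s, p i = 1)
    (hy : ∀ i ∈ s, 1 ≤ y i) :
    ∑ i ∈ s, p i * Real.log (y i) ≤ Real.log (∑ i ∈ s, p i * y i) := by
  have hgm := Real.geom_mean_le_arith_mean_weighted s p y hp hs
    (fun i hi => le_trans zero_le_one (hy i hi))
  have hppos : 0 < ∏ i ∈ s, y i ^ p i :=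
    Finset.prod_pos (fun i hi => Real.rpow_pos_of_pos (lt_of_lt_of_le one_pos (hy i hi)) _)
  have hlog : Real.log (∏ i ∈ s, y i ^ p i) = ∑ i ∈ s, p i * Real.log (y i) := by
    rw [Real.log_prod (fun i hi => (Real.rpow_pos_of_pos (lt_of_lt_of_le one_pos (hy i hi)) _).ne')]
    exact Finset.sum_congr rfl (fun i hi =>
      Real.log_rpow (lt_of_lt_of_le one_pos (hy i hi)) _)
  calc ∑ i ∈ s, p i * Real.log (y i) = Real.log (∏ i ∈ s, y i ^ p i) := hlog.symm
    _ ≤ Real.log (∑ i ∈ s, p i * y i) := Real.log_le_log hppos hgm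

/-- In a convex combination some element is at most the average. -/
lemma exists_le_avg {ι : Type*} (s : Finset ι) (p v : ι → ℝ)
    (hp : ∀ i ∈ s, 0 ≤ p i) (hs : ∑ i ∈ s, p i = 1) :
    ∃ i ∈ s, v i ≤ ∑ j ∈ s, p j * v j := by
  by_contra hcon
  push_neg at hcon
  have hex : ∃ i ∈ s, 0 < p i := by
    by_contra h
    push_neg at h
    have : ∑ i ∈ s, p i = 0 := Finset.sum_eq_zero
      (fun i hi => le_antisymm (h i hi) (hp i hi))
    rw [hs] at this; norm_num at this
  obtain ⟨i0, hi0, hpi0⟩ := hex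
  have hlt : ∑ j ∈ s, p j * (∑ j ∈ s, p j * v j) < ∑ j ∈ s, p j * v j := by
    apply Finset.sum_lt_sum
    · intro j hj
      rcases (hp j hj).eq_or_lt with h | h
      · simp [← h]
      · exact (mul_le_mul_of_nonneg_left (hcon j hj).le (hp j hj))
    · exact ⟨i0, hi0, by
        exact mul_lt_mul_of_pos_left (hcon i0 hi0) hpi0⟩
  rw [← Finset.sum_mul, hs, one_mul] at hlt
  exact lt_irrefl _ hlt

/-- Setup for the facility-location rounding argument. -/
structure FL (F C : Type*) [Fintype F] [Fintype C] where
  cost : F → ℝ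
  dist : F → C → ℝ
  x : F → ℝ
  xa : F → C → ℝ
  eps : ℝ
  z : ℕ
  K : ℝ
  Bhat : ℝ
  hcost : ∀ f, 0 ≤ cost f
  hdist : ∀ f c, 0 ≤ dist f c
  hx0 : ∀ f, 0 ≤ x f
  hxa0 : ∀ f c, 0 ≤ xa f c
  hxax : ∀ f c, xa f c ≤ x f
  hsum : ∀ c, ∑ f, xa f c = 1
  heps0 : 0 < eps
  heps1 : eps < 1
  hzpos : 0 < z
  hK0 : 0 ≤ K
  hB0 : 0 ≤ Bhat
  hKb : (∑ f, x f * cost f) + (∑ f, ∑ c, xa f c * dist f c) ≤ K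

namespace FL

variable {F C : Type*} [Fintype F] [Fintype C] [Nonempty C] (P : FL F C)

def Fs : Finset F := Finset.univ.filter (fun f => 0 < P.x f)

def X : ℝ := ∑ f ∈ P.Fs, P.x f

def q (f : F) : ℝ := P.x f / P.X

def r (f : F) (c : C) : ℝ := P.xa f c / P.x f

def w (f : F) (A : Finset C) : ℝ := (∏ c ∈ A, P.r f c) * ∏ c ∈ Aᶜ, (1 - P.r f c)

def Om : Finset (F × Finset C) := P.Fs ×ˢ Finset.univ

def p (y : F × Finset C) : ℝ := P.q y.1 * P.w y.1 y.2

def covered (S : C → ℕ) : Prop := ∀ c, P.z ≤ S c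

def upd (S : C → ℕ) (A : Finset C) : C → ℕ :=
  fun c => if c ∈ A ∧ S c < P.z then S c + 1 else S c

def gam (y : F × Finset C) (S : C → ℕ) : ℝ :=
  P.cost y.1 + ∑ c ∈ y.2.filter (fun c => S c < P.z), P.dist y.1 c

def c1 : ℝ := -Real.log (1 - P.eps / P.X)

def V : ℕ → (C → ℕ) → ℝ
  | 0, S => if P.covered S then 0 else P.Bhat
  | m+1, S => if P.covered S then 0
      else ∑ y ∈ P.Om, P.p y * (P.gam y S + V m (P.upd S y.2))

def G : ℕ → (C → ℕ) → ℝ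
  | 0, _ => 1
  | m+1, S => if P.covered S then 1
      else Real.exp P.c1 * ∑ y ∈ P.Om, P.p y * G m (P.upd S y.2)

def g : ℕ → ℕ → ℝ
  | 0, _ => 1
  | m+1, s => if P.z ≤ s then 1
      else Real.exp P.c1 * ((1/P.X) * g m (s+1) + (1 - 1/P.X) * g m s)

/- ## basic facts -/

lemma mem_Fs {f : F} : f ∈ P.Fs ↔ 0 < P.x f := by simp [Fs]

lemma xa_eq_zero {f : F} (hf : f ∉ P.Fs) (c : C) : P.xa f c = 0 := by
  have hx : P.x f = 0 := le_antisymm (by simpa [mem_Fs, not_lt] using hf) (P.hx0 f)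
  exact le_antisymm (hx ▸ P.hxax f c) (P.hxa0 f c)

lemma sum_xa_Fs (c : C) : ∑ f ∈ P.Fs, P.xa f c = 1 := by
  rw [← P.hsum c]
  exact Finset.sum_subset (Finset.subset_univ _)
    (fun f _ hf => P.xa_eq_zero hf c)

lemma one_le_X : 1 ≤ P.X := by
  have c : C := Classical.arbitrary C
  calc (1:ℝ) = ∑ f ∈ P.Fs, P.xa f c := (P.sum_xa_Fs c).symm
    _ ≤ P.X := Finset.sum_le_sum (fun f _ => P.hxax f _)

lemma X_pos : 0 < P.X := lt_of_lt_of_le one_pos P.one_le_X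

lemma sum_q : ∑ f ∈ P.Fs, P.q f = 1 := by
  simp only [q]
  rw [← Finset.sum_div]
  exact div_self P.X_pos.ne'

lemma q_nonneg (f : F) : 0 ≤ P.q f := div_nonneg (P.hx0 f) P.X_pos.le

lemma r_nonneg (f : F) (c : C) : 0 ≤ P.r f c := by
  rcases le_or_gt (P.x f) 0 with h | h
  · have : P.x f = 0 := le_antisymm h (P.hx0 f)
    simp [r, this]
  · exact div_nonneg (P.hxa0 f c) h.le

lemma r_le_one (f : F) (c : C) : P.r f c ≤ 1 := by
  rcases le_or_gt (P.x f) 0 with h | h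
  · have : P.x f = 0 := le_antisymm h (P.hx0 f)
    simp [r, this]
  · exact div_le_one_of_le₀ (P.hxax f c) h.le

lemma w_nonneg (f : F) (A : Finset C) : 0 ≤ P.w f A :=
  mul_nonneg (Finset.prod_nonneg (fun c _ => P.r_nonneg f c))
    (Finset.prod_nonneg (fun c _ => by linarith [P.r_le_one f c]))

lemma sum_w (f : F) : ∑ A : Finset C, P.w f A = 1 := by
  have h := Finset.prod_add (fun c => P.r f c) (fun c => 1 - P.r f c) (Finset.univ : Finset C)
  simp only [add_sub_cancel, Finset.prod_const_one] at h
  rw [← Finset.powerset_univ]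
  simp only [w, Finset.compl_eq_univ_sdiff]
  exact h.symm

/-- Marginalization across one customer. -/
lemma sum_w_ite (f : F) (c : C) (u v : ℝ) :
    ∑ A : Finset C, P.w f A * (if c ∈ A then u else v)
      = P.r f c * u + (1 - P.r f c) * v := by
  set s := (Finset.univ : Finset C).erase c with hs
  have hc : c ∉ s := Finset.notMem_erase c _
  have huniv : (Finset.univ : Finset C) = insert c s :=
    (Finset.insert_erase (Finset.mem_univ c)).symm
  have hW : ∑ A ∈ s.powerset, (∏ c' ∈ A, P.r f c') * ∏ c' ∈ s \ A, (1 - P.r f c') = 1 := by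
    have h := Finset.prod_add (fun c' => P.r f c') (fun c' => 1 - P.r f c') s
    simp only [add_sub_cancel, Finset.prod_const_one] at h
    exact h.symm
  have e1 : ∀ A ∈ s.powerset, P.w f A * (if c ∈ A then u else v)
      = ((∏ c' ∈ A, P.r f c') * ∏ c' ∈ s \ A, (1 - P.r f c')) * ((1 - P.r f c) * v) := by
    intro A hA
    rw [Finset.mem_powerset] at hA
    have hcA : c ∉ A := fun h => hc (hA h)
    have hcompl : Aᶜ = insert c (s \ A) := by
      ext a
      by_cases ha : a = c
      · subst ha; simp [hcA]
      · simp only [Finset.mem_compl, Finset.mem_insert, Finset.mem_sdiff, hs,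
          Finset.mem_erase, Finset.mem_univ, and_true, true_and]
        tauto
    have hcsd : c ∉ s \ A := fun h => hc (Finset.mem_sdiff.mp h).1
    rw [if_neg hcA, w, hcompl, Finset.prod_insert hcsd]
    ring
  have e2 : ∀ A ∈ s.powerset, P.w f (insert c A) * (if c ∈ insert c A then u else v)
      = ((∏ c' ∈ A, P.r f c') * ∏ c' ∈ s \ A, (1 - P.r f c')) * (P.r f c * u) := by
    intro A hA
    rw [Finset.mem_powerset] at hA
    have hcA : c ∉ A := fun h => hc (hA h)
    have hcompl : (insert c A)ᶜ = s \ A := by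
      ext a
      by_cases ha : a = c
      · subst ha; simp [hc]
      · simp only [Finset.mem_compl, Finset.mem_insert, Finset.mem_sdiff, hs,
          Finset.mem_erase, Finset.mem_univ, and_true, true_and]
        tauto
    rw [if_pos (Finset.mem_insert_self c A), w, hcompl, Finset.prod_insert hcA]
    ring
  rw [← Finset.powerset_univ, huniv, Finset.sum_powerset_insert hc,
    Finset.sum_congr rfl e1, Finset.sum_congr rfl e2, ← Finset.sum_mul, ← Finset.sum_mul, hW]
  ring

lemma p_nonneg (y : F × Finset C) : 0 ≤ P.p y :=
  mul_nonneg (P.q_nonneg _) (P.w_nonneg _ _)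

lemma sum_p : ∑ y ∈ P.Om, P.p y = 1 := by
  rw [Om, Finset.sum_product]
  simp only [p]
  rw [← P.sum_q]
  exact Finset.sum_congr rfl (fun f _ => by rw [← Finset.mul_sum, P.sum_w f, mul_one])

lemma qr_eq {f : F} (hf : f ∈ P.Fs) (c : C) : P.q f * P.r f c = P.xa f c / P.X := by
  have hx : P.x f ≠ 0 := (P.mem_Fs.mp hf).ne'
  rw [q, r, div_mul_div_comm, mul_comm P.X (P.x f), mul_div_mul_left _ _ hx]

lemma sum_qr (c : C) : ∑ f ∈ P.Fs, P.q f * P.r f c = 1 / P.X := by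
  rw [Finset.sum_congr rfl (fun f hf => P.qr_eq hf c), ← Finset.sum_div, P.sum_xa_Fs c]

/- ## expectation bounds -/

lemma gam_nonneg (y : F × Finset C) (S : C → ℕ) : 0 ≤ P.gam y S :=
  add_nonneg (P.hcost _) (Finset.sum_nonneg (fun c _ => P.hdist _ c))

lemma gam_eq (y : F × Finset C) (S : C → ℕ) :
    P.gam y S = P.cost y.1 + ∑ c ∈ Finset.univ.filter (fun c => S c < P.z),
      (if c ∈ y.2 then P.dist y.1 c else 0) := by
  rw [gam]
  congr 1
  rw [Finset.sum_filter, Finset.sum_filter]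
  rw [← Finset.sum_subset (Finset.subset_univ y.2)]
  · exact Finset.sum_congr rfl (fun c hc => by simp [hc])
  · intro c _ hc
    simp [hc]

lemma sum_w_gam (f : F) (S : C → ℕ) :
    ∑ A : Finset C, P.w f A * P.gam (f, A) S
      = P.cost f + ∑ c ∈ Finset.univ.filter (fun c => S c < P.z),
          P.r f c * P.dist f c := by
  calc ∑ A : Finset C, P.w f A * P.gam (f, A) S
      = ∑ A : Finset C, (P.w f A * P.cost f
          + ∑ c ∈ Finset.univ.filter (fun c => S c < P.z),
              P.w f A * (if c ∈ A then P.dist f c else 0)) := by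
        refine Finset.sum_congr rfl (fun A _ => ?_)
        rw [P.gam_eq (f, A) S, mul_add, Finset.mul_sum]
    _ = (∑ A : Finset C, P.w f A) * P.cost f
          + ∑ c ∈ Finset.univ.filter (fun c => S c < P.z),
              ∑ A : Finset C, P.w f A * (if c ∈ A then P.dist f c else 0) := by
        rw [Finset.sum_add_distrib, ← Finset.sum_mul, Finset.sum_comm]
    _ = P.cost f + ∑ c ∈ Finset.univ.filter (fun c => S c < P.z),
          P.r f c * P.dist f c := by
        rw [P.sum_w f, one_mul]
        congr 1
        refine Finset.sum_congr rfl (fun c _ => ?_)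
        rw [P.sum_w_ite f c (P.dist f c) 0, mul_zero, add_zero]

lemma sum_p_gam (S : C → ℕ) : ∑ y ∈ P.Om, P.p y * P.gam y S ≤ P.K / P.X := by
  have step1 : ∑ y ∈ P.Om, P.p y * P.gam y S
      = ∑ f ∈ P.Fs, (P.x f * P.cost f
          + ∑ c ∈ Finset.univ.filter (fun c => S c < P.z), P.xa f c * P.dist f c) / P.X := by
    rw [Om, Finset.sum_product]
    refine Finset.sum_congr rfl (fun f hf => ?_)
    have hx : P.x f ≠ 0 := (P.mem_Fs.mp hf).ne'
    have : ∑ A : Finset C, P.p (f, A) * P.gam (f, A) S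
        = P.q f * ∑ A : Finset C, P.w f A * P.gam (f, A) S := by
      rw [Finset.mul_sum]
      exact Finset.sum_congr rfl (fun A _ => by rw [p]; ring)
    rw [this, P.sum_w_gam f S]
    rw [mul_add, add_div]
    congr 1
    · rw [q, div_mul_eq_mul_div]
    · rw [Finset.mul_sum, Finset.sum_div]
      refine Finset.sum_congr rfl (fun c _ => ?_)
      rw [← mul_assoc, P.qr_eq hf, div_mul_eq_mul_div]
  rw [step1, ← Finset.sum_div]
  have hnum : ∑ f ∈ P.Fs, (P.x f * P.cost f
      + ∑ c ∈ Finset.univ.filter (fun c => S c < P.z), P.xa f c * P.dist f c) ≤ P.K := by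
    rw [Finset.sum_add_distrib]
    refine le_trans (add_le_add ?_ ?_) P.hKb
    · exact Finset.sum_le_sum_of_subset_of_nonneg (Finset.subset_univ _)
        (fun f _ _ => mul_nonneg (P.hx0 f) (P.hcost f))
    · refine le_trans (Finset.sum_le_sum (fun f (_ : f ∈ P.Fs) =>
        Finset.sum_le_sum_of_subset_of_nonneg (Finset.subset_univ _)
          (fun c _ _ => mul_nonneg (P.hxa0 f c) (P.hdist f c))))
        (Finset.sum_le_sum_of_subset_of_nonneg (Finset.subset_univ _)
          (fun f _ _ => Finset.sum_nonneg (fun c _ => mul_nonneg (P.hxa0 f c) (P.hdist f c))))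
  exact (div_le_div_iff_of_pos_right P.X_pos).mpr hnum

/- ## c1 facts -/

lemma eps_div_X_lt_one : P.eps / P.X < 1 := by
  have := P.one_le_X
  rw [div_lt_one P.X_pos]
  linarith [P.heps1]

lemma eps_div_X_pos : 0 < P.eps / P.X := div_pos P.heps0 P.X_pos

lemma base_pos : 0 < 1 - P.eps / P.X := by linarith [P.eps_div_X_lt_one]

lemma c1_pos : 0 < P.c1 := by
  rw [c1, neg_pos]
  exact Real.log_neg P.base_pos (by linarith [P.eps_div_X_pos])

lemma exp_c1 : Real.exp P.c1 = (1 - P.eps / P.X)⁻¹ := by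
  rw [c1, Real.exp_neg, Real.exp_log P.base_pos]

lemma exp_c1_mul : Real.exp P.c1 * (1 - P.eps / P.X) = 1 := by
  rw [P.exp_c1, inv_mul_cancel₀ P.base_pos.ne']

lemma one_le_exp_c1 : 1 ≤ Real.exp P.c1 := by
  rw [Real.one_le_exp_iff]
  exact P.c1_pos.le

lemma X_c1_gt_eps : P.eps < P.X * P.c1 := by
  have hlog : Real.log (1 - P.eps / P.X) < -(P.eps / P.X) := by
    have := Real.log_lt_sub_one_of_pos P.base_pos (by linarith [P.eps_div_X_pos])
    linarith
  have : P.eps / P.X < P.c1 := by rw [c1]; linarith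
  calc P.eps = P.X * (P.eps / P.X) := by
        rw [mul_div_cancel₀ _ P.X_pos.ne']
    _ < P.X * P.c1 := mul_lt_mul_of_pos_left this P.X_pos

/- ## g lemmas -/

lemma one_div_X_pos : 0 < 1 / P.X := by
  have := P.X_pos; positivity

lemma one_div_X_le_one : 1 / P.X ≤ 1 := by
  rw [div_le_one P.X_pos]; exact P.one_le_X

lemma g_ge_one : ∀ m s, 1 ≤ P.g m s := by
  intro m
  induction m with
  | zero => intro s; simp [g]
  | succ m ih =>
    intro s
    rw [g]
    split_ifs with h
    · exact le_refl 1
    · have h1 : (1:ℝ) ≤ (1/P.X) * P.g m (s+1) + (1 - 1/P.X) * P.g m s := by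
        have a1 := ih (s+1); have a2 := ih s
        have b1 := P.one_div_X_pos; have b2 := P.one_div_X_le_one
        nlinarith
      calc (1:ℝ) = 1 * 1 := by ring
        _ ≤ Real.exp P.c1 * ((1/P.X) * P.g m (s+1) + (1 - 1/P.X) * P.g m s) :=
            mul_le_mul P.one_le_exp_c1 h1 zero_le_one (le_trans zero_le_one P.one_le_exp_c1)

lemma g_covered (m : ℕ) {s : ℕ} (h : P.z ≤ s) : P.g m s = 1 := by
  cases m with
  | zero => rfl
  | succ m => rw [g, if_pos h]

lemma lam_pos : (0:ℝ) < 1 - P.eps := by linarith [P.heps1]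

lemma laminv_ge_one : (1:ℝ) ≤ (1 - P.eps)⁻¹ := by
  have h := inv_mul_cancel₀ P.lam_pos.ne'
  have h2 : (0:ℝ) ≤ (1 - P.eps)⁻¹ := inv_nonneg.mpr P.lam_pos.le
  nlinarith [P.heps0]

lemma g_le_pow : ∀ m s, P.g m s ≤ ((1 - P.eps)⁻¹) ^ (P.z - s) := by
  intro m
  induction m with
  | zero =>
    intro s
    have : P.g 0 s = 1 := rfl
    rw [this]
    exact one_le_pow₀ P.laminv_ge_one
  | succ m ih =>
    intro s
    rw [g]
    split_ifs with h
    · rw [Nat.sub_eq_zero_of_le h, pow_zero]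
    · have hs : s < P.z := not_le.mp h
      have hts : P.z - s = (P.z - (s+1)) + 1 := by omega
      set t := P.z - (s+1) with ht
      have h1 : P.g m (s+1) ≤ ((1-P.eps)⁻¹)^t := ih (s+1)
      have h2 : P.g m s ≤ ((1-P.eps)⁻¹)^(t+1) := by rw [← hts]; exact ih s
      have hcoef1 : (0:ℝ) ≤ 1/P.X := P.one_div_X_pos.le
      have hcoef2 : (0:ℝ) ≤ 1 - 1/P.X := by linarith [P.one_div_X_le_one]
      have hXne : P.X ≠ 0 := P.X_pos.ne'
      have step : (1/P.X) * P.g m (s+1) + (1 - 1/P.X) * P.g m s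
          ≤ ((1-P.eps)⁻¹)^(t+1) * (1 - P.eps/P.X) := by
        have e1 : ((1-P.eps)⁻¹)^t = ((1-P.eps)⁻¹)^(t+1) * (1 - P.eps) := by
          rw [pow_succ, mul_assoc, inv_mul_cancel₀ P.lam_pos.ne', mul_one]
        calc (1/P.X) * P.g m (s+1) + (1 - 1/P.X) * P.g m s
            ≤ (1/P.X) * ((1-P.eps)⁻¹)^t + (1 - 1/P.X) * ((1-P.eps)⁻¹)^(t+1) :=
              add_le_add (mul_le_mul_of_nonneg_left h1 hcoef1)
                (mul_le_mul_of_nonneg_left h2 hcoef2)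
          _ = ((1-P.eps)⁻¹)^(t+1) * (1 - P.eps/P.X) := by
              rw [e1]; field_simp; ring
      rw [hts]
      calc Real.exp P.c1 * ((1/P.X) * P.g m (s+1) + (1 - 1/P.X) * P.g m s)
          ≤ Real.exp P.c1 * (((1-P.eps)⁻¹)^(t+1) * (1 - P.eps/P.X)) :=
            mul_le_mul_of_nonneg_left step (le_trans zero_le_one P.one_le_exp_c1)
        _ = ((1-P.eps)⁻¹)^(t+1) * (Real.exp P.c1 * (1 - P.eps/P.X)) := by ring
        _ = ((1-P.eps)⁻¹)^(t+1) := by rw [P.exp_c1_mul, mul_one]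

/- ## G lemmas -/

lemma G_covered (m : ℕ) {S : C → ℕ} (h : P.covered S) : P.G m S = 1 := by
  cases m with
  | zero => rfl
  | succ m => rw [G, if_pos h]

lemma G_ge_one : ∀ m (S : C → ℕ), 1 ≤ P.G m S := by
  intro m
  induction m with
  | zero => intro S; exact le_refl 1
  | succ m ih =>
    intro S
    rw [G]
    split_ifs with h
    · exact le_refl 1
    · have hsum : 1 ≤ ∑ y ∈ P.Om, P.p y * P.G m (P.upd S y.2) := by
        calc (1:ℝ) = ∑ y ∈ P.Om, P.p y := P.sum_p.symm
          _ ≤ ∑ y ∈ P.Om, P.p y * P.G m (P.upd S y.2) :=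
            Finset.sum_le_sum (fun y _ =>
              le_mul_of_one_le_right (P.p_nonneg y) (ih (P.upd S y.2)))
      calc (1:ℝ) = 1*1 := by ring
        _ ≤ _ := mul_le_mul P.one_le_exp_c1 hsum zero_le_one
            (le_trans zero_le_one P.one_le_exp_c1)

lemma upd_ge (S : C → ℕ) (A : Finset C) (c : C) : S c ≤ P.upd S A c := by
  rw [upd]
  split_ifs <;> omega

lemma filt_nonempty {S : C → ℕ} (hS : ¬ P.covered S) :
    (Finset.univ.filter (fun c => S c < P.z)).Nonempty := by
  rw [covered] at hS
  push_neg at hS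
  obtain ⟨c, hc⟩ := hS
  exact ⟨c, by simp [hc]⟩

lemma one_le_sum_g (m : ℕ) {S : C → ℕ} (hS : ¬ P.covered S) (T : C → ℕ) :
    1 ≤ ∑ c ∈ Finset.univ.filter (fun c => S c < P.z), P.g m (T c) := by
  obtain ⟨c0, hc0⟩ := P.filt_nonempty hS
  calc (1:ℝ) ≤ ∑ c ∈ Finset.univ.filter (fun c => S c < P.z), 1 := by
        rw [Finset.sum_const, nsmul_eq_mul, mul_one]
        exact_mod_cast Finset.card_pos.mpr ⟨c0, hc0⟩
    _ ≤ _ := Finset.sum_le_sum (fun c _ => P.g_ge_one m (T c))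

lemma G_le : ∀ m (S : C → ℕ), ¬ P.covered S →
    P.G m S ≤ ∑ c ∈ Finset.univ.filter (fun c => S c < P.z), P.g m (S c) := by
  intro m
  induction m with
  | zero =>
    intro S hS
    have h1 : P.G 0 S = 1 := rfl
    rw [h1]
    exact P.one_le_sum_g 0 hS S
  | succ m ih =>
    intro S hS
    rw [G, if_neg hS]
    have hpt : ∀ y ∈ P.Om, P.G m (P.upd S y.2)
        ≤ ∑ c ∈ Finset.univ.filter (fun c => S c < P.z), P.g m (P.upd S y.2 c) := by
      intro y _
      by_cases hco : P.covered (P.upd S y.2)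
      · rw [P.G_covered m hco]
        exact P.one_le_sum_g m hS (P.upd S y.2)
      · refine le_trans (ih _ hco) ?_
        apply Finset.sum_le_sum_of_subset_of_nonneg
        · intro c hc
          simp only [Finset.mem_filter, Finset.mem_univ, true_and] at hc ⊢
          have := P.upd_ge S y.2 c
          omega
        · intro c _ _
          exact le_trans zero_le_one (P.g_ge_one m _)
    have hmono : ∑ y ∈ P.Om, P.p y * P.G m (P.upd S y.2)
        ≤ ∑ y ∈ P.Om, P.p y *
            ∑ c ∈ Finset.univ.filter (fun c => S c < P.z), P.g m (P.upd S y.2 c) :=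
      Finset.sum_le_sum (fun y hy => mul_le_mul_of_nonneg_left (hpt y hy) (P.p_nonneg y))
    have hswap : ∑ y ∈ P.Om, P.p y *
          ∑ c ∈ Finset.univ.filter (fun c => S c < P.z), P.g m (P.upd S y.2 c)
        = ∑ c ∈ Finset.univ.filter (fun c => S c < P.z),
            ∑ y ∈ P.Om, P.p y * P.g m (P.upd S y.2 c) := by
      simp_rw [Finset.mul_sum]
      exact Finset.sum_comm
    have hinner : ∀ c ∈ Finset.univ.filter (fun c => S c < P.z),
        ∑ y ∈ P.Om, P.p y * P.g m (P.upd S y.2 c)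
          = (1/P.X) * P.g m (S c + 1) + (1 - 1/P.X) * P.g m (S c) := by
      intro c hc
      have hcz : S c < P.z := by simpa using hc
      have hupd : ∀ A : Finset C, P.g m (P.upd S A c)
          = if c ∈ A then P.g m (S c + 1) else P.g m (S c) := by
        intro A
        rw [upd]
        by_cases h : c ∈ A <;> simp [h, hcz]
      have hf : ∀ f ∈ P.Fs, ∑ A : Finset C, P.p (f, A) * P.g m (P.upd S A c)
          = P.q f * (P.r f c * P.g m (S c + 1) + (1 - P.r f c) * P.g m (S c)) := by
        intro f _
        have e : ∀ A : Finset C, P.p (f, A) * P.g m (P.upd S A c)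
            = P.q f * (P.w f A * (if c ∈ A then P.g m (S c + 1) else P.g m (S c))) := by
          intro A
          rw [hupd A, p]
          ring
        rw [Finset.sum_congr rfl (fun A _ => e A), ← Finset.mul_sum,
          P.sum_w_ite f c (P.g m (S c + 1)) (P.g m (S c))]
      rw [Om, Finset.sum_product, Finset.sum_congr rfl hf]
      have expand : ∀ f ∈ P.Fs,
          P.q f * (P.r f c * P.g m (S c + 1) + (1 - P.r f c) * P.g m (S c))
            = (P.q f * P.r f c) * P.g m (S c + 1)
              + (P.q f - P.q f * P.r f c) * P.g m (S c) := by
        intro f _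
        ring
      rw [Finset.sum_congr rfl expand, Finset.sum_add_distrib, ← Finset.sum_mul,
        ← Finset.sum_mul, Finset.sum_sub_distrib, P.sum_qr c, P.sum_q]
    calc Real.exp P.c1 * ∑ y ∈ P.Om, P.p y * P.G m (P.upd S y.2)
        ≤ Real.exp P.c1 * ∑ c ∈ Finset.univ.filter (fun c => S c < P.z),
            ((1/P.X) * P.g m (S c + 1) + (1 - 1/P.X) * P.g m (S c)) := by
          apply mul_le_mul_of_nonneg_left _ (le_trans zero_le_one P.one_le_exp_c1)
          rw [← Finset.sum_congr rfl hinner, ← hswap]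
          exact hmono
      _ = ∑ c ∈ Finset.univ.filter (fun c => S c < P.z),
            Real.exp P.c1 * ((1/P.X) * P.g m (S c + 1) + (1 - 1/P.X) * P.g m (S c)) :=
          Finset.mul_sum _ _ _
      _ = ∑ c ∈ Finset.univ.filter (fun c => S c < P.z), P.g (m+1) (S c) := by
          refine Finset.sum_congr rfl (fun c hc => ?_)
          have hcz : S c < P.z := by simpa using hc
          rw [g, if_neg (not_le.mpr hcz)]

/- ## V lemmas -/

def beta : ℝ := P.K / (P.X * P.c1)

lemma beta_nonneg : 0 ≤ P.beta :=
  div_nonneg P.hK0 (mul_nonneg P.X_pos.le P.c1_pos.le)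

lemma beta_c1 : P.beta * P.c1 = P.K / P.X := by
  rw [beta, div_mul_eq_mul_div, mul_comm P.X P.c1, ← div_div,
    mul_div_assoc, div_self P.c1_pos.ne', mul_one]

lemma V_covered (m : ℕ) {S : C → ℕ} (h : P.covered S) : P.V m S = 0 := by
  cases m with
  | zero => rw [V, if_pos h]
  | succ m => rw [V, if_pos h]

lemma V_le : ∀ m (S : C → ℕ),
    P.V m S ≤ P.beta * Real.log (P.G m S)
      + P.Bhat * Real.exp (-P.c1 * m) * P.G m S := by
  intro m
  induction m with
  | zero =>
    intro S
    by_cases h : P.covered S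
    · rw [P.V_covered 0 h, P.G_covered 0 h]
      simp only [Real.log_one, mul_zero, zero_add, mul_one]
      exact mul_nonneg P.hB0 (Real.exp_nonneg _)
    · rw [V, if_neg h]
      have hG : P.G 0 S = 1 := rfl
      rw [hG]
      simp
  | succ m ih =>
    intro S
    by_cases h : P.covered S
    · rw [P.V_covered (m+1) h, P.G_covered (m+1) h]
      simp only [Real.log_one, mul_zero, zero_add, mul_one]
      exact mul_nonneg P.hB0 (Real.exp_nonneg _)
    · rw [V, if_neg h, G, if_neg h]
      set T := ∑ y ∈ P.Om, P.p y * P.G m (P.upd S y.2) with hT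
      have hT1 : 1 ≤ T := by
        rw [hT]
        calc (1:ℝ) = ∑ y ∈ P.Om, P.p y := P.sum_p.symm
          _ ≤ _ := Finset.sum_le_sum (fun y _ =>
            le_mul_of_one_le_right (P.p_nonneg y) (P.G_ge_one m (P.upd S y.2)))
      have hTpos : 0 < T := lt_of_lt_of_le one_pos hT1
      have step1 : ∑ y ∈ P.Om, P.p y * (P.gam y S + P.V m (P.upd S y.2))
          = (∑ y ∈ P.Om, P.p y * P.gam y S) + ∑ y ∈ P.Om, P.p y * P.V m (P.upd S y.2) := by
        rw [← Finset.sum_add_distrib]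
        exact Finset.sum_congr rfl (fun y _ => by ring)
      have step2 : ∑ y ∈ P.Om, P.p y * P.V m (P.upd S y.2)
          ≤ P.beta * (∑ y ∈ P.Om, P.p y * Real.log (P.G m (P.upd S y.2)))
            + P.Bhat * Real.exp (-P.c1 * m) * T := by
        calc ∑ y ∈ P.Om, P.p y * P.V m (P.upd S y.2)
            ≤ ∑ y ∈ P.Om, P.p y * (P.beta * Real.log (P.G m (P.upd S y.2))
                + P.Bhat * Real.exp (-P.c1 * m) * P.G m (P.upd S y.2)) :=
              Finset.sum_le_sum (fun y _ =>
                mul_le_mul_of_nonneg_left (ih (P.upd S y.2)) (P.p_nonneg y))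
          _ = P.beta * (∑ y ∈ P.Om, P.p y * Real.log (P.G m (P.upd S y.2)))
              + P.Bhat * Real.exp (-P.c1 * m) * T := by
              rw [hT, Finset.mul_sum, Finset.mul_sum, ← Finset.sum_add_distrib]
              exact Finset.sum_congr rfl (fun y _ => by ring)
      have hjensen : ∑ y ∈ P.Om, P.p y * Real.log (P.G m (P.upd S y.2))
          ≤ Real.log T :=
        jensen_log P.Om P.p _ (fun y _ => P.p_nonneg y) P.sum_p
          (fun y _ => P.G_ge_one m (P.upd S y.2))
      have hlog : Real.log (Real.exp P.c1 * T) = P.c1 + Real.log T := by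
        rw [Real.log_mul (Real.exp_ne_zero _) hTpos.ne', Real.log_exp]
      have hexp : Real.exp (-P.c1 * (m+1:ℕ)) * Real.exp P.c1 = Real.exp (-P.c1 * m) := by
        rw [← Real.exp_add]
        congr 1
        push_cast
        ring
      calc (∑ y ∈ P.Om, P.p y * (P.gam y S + P.V m (P.upd S y.2)))
          ≤ P.K / P.X + (P.beta * (∑ y ∈ P.Om, P.p y * Real.log (P.G m (P.upd S y.2)))
              + P.Bhat * Real.exp (-P.c1 * m) * T) := by
            rw [step1]
            exact add_le_add (P.sum_p_gam S) step2
        _ ≤ P.K / P.X + (P.beta * Real.log T + P.Bhat * Real.exp (-P.c1 * m) * T) := by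
            have := mul_le_mul_of_nonneg_left hjensen P.beta_nonneg
            linarith
        _ = P.beta * Real.log (Real.exp P.c1 * T)
            + P.Bhat * Real.exp (-P.c1 * (m+1:ℕ)) * (Real.exp P.c1 * T) := by
            rw [hlog, mul_add, ← P.beta_c1]
            have : P.Bhat * Real.exp (-P.c1 * (m+1:ℕ)) * (Real.exp P.c1 * T)
                = P.Bhat * (Real.exp (-P.c1 * (m+1:ℕ)) * Real.exp P.c1) * T := by ring
            rw [this, hexp]
            ring

/- ## extraction -/

lemma extract : ∀ (m : ℕ) (S : C → ℕ),
    (∃ (a : F → ℕ) (b : F → C → ℕ),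
      (∀ f c, b f c ≤ a f) ∧ (∀ c, P.z ≤ S c + ∑ f, b f c) ∧
      ((∑ f, (a f : ℝ) * P.cost f) + ∑ f, ∑ c, (b f c : ℝ) * P.dist f c ≤ P.V m S))
    ∨ P.Bhat ≤ P.V m S := by
  intro m
  induction m with
  | zero =>
    intro S
    by_cases h : P.covered S
    · left
      refine ⟨fun _ => 0, fun _ _ => 0, fun f c => le_refl 0, fun c => ?_, ?_⟩
      · simpa using h c
      · rw [P.V_covered 0 h]
        simp
    · right
      rw [V, if_neg h]
  | succ m ih =>
    intro S
    by_cases h : P.covered S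
    · left
      refine ⟨fun _ => 0, fun _ _ => 0, fun f c => le_refl 0, fun c => ?_, ?_⟩
      · simpa using h c
      · rw [P.V_covered (m+1) h]
        simp
    · have hV : P.V (m+1) S = ∑ y ∈ P.Om, P.p y * (P.gam y S + P.V m (P.upd S y.2)) := by
        rw [V, if_neg h]
      obtain ⟨y, hy, hle⟩ := exists_le_avg P.Om P.p
        (fun y => P.gam y S + P.V m (P.upd S y.2)) (fun y _ => P.p_nonneg y) P.sum_p
      rw [← hV] at hle
      rcases ih (P.upd S y.2) with ⟨a, b, hba, hcov, hcost⟩ | hB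
      · left
        refine ⟨fun f => a f + (if f = y.1 then 1 else 0),
          fun f c => b f c + (if f = y.1 ∧ c ∈ y.2 ∧ S c < P.z then 1 else 0), ?_, ?_, ?_⟩
        · intro f c
          refine add_le_add (hba f c) ?_
          by_cases hf : f = y.1
          · simp only [hf, true_and]
            split_ifs <;> omega
          · simp [hf]
        · intro c
          have hc := hcov c
          have hsum : ∑ f, (b f c + (if f = y.1 ∧ c ∈ y.2 ∧ S c < P.z then 1 else 0))
              = (∑ f, b f c) + (if c ∈ y.2 ∧ S c < P.z then 1 else 0) := by
            rw [Finset.sum_add_distrib]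
            congr 1
            by_cases hQ : c ∈ y.2 ∧ S c < P.z
            · simp only [hQ, and_true]
              rw [Finset.sum_ite_eq' Finset.univ y.1 (fun _ => 1)]
              simp
            · simp [hQ]
          have hupd : P.upd S y.2 c = S c + (if c ∈ y.2 ∧ S c < P.z then 1 else 0) := by
            rw [upd]; split_ifs <;> omega
          rw [hsum]
          rw [hupd] at hc
          omega
        · have e1 : ∑ f, (((a f + if f = y.1 then 1 else 0 : ℕ)) : ℝ) * P.cost f
              = (∑ f, (a f : ℝ) * P.cost f) + P.cost y.1 := by
            have he : ∀ f, (((a f + if f = y.1 then 1 else 0 : ℕ)) : ℝ) * P.cost f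
                = (a f : ℝ) * P.cost f + (if f = y.1 then P.cost f else 0) := by
              intro f
              by_cases hf : f = y.1 <;> simp [hf] <;> push_cast <;> ring
            rw [Finset.sum_congr rfl (fun f _ => he f), Finset.sum_add_distrib,
              Finset.sum_ite_eq' Finset.univ y.1 (fun f => P.cost f)]
            simp
          have e2 : ∑ f, ∑ c, (((b f c + if f = y.1 ∧ c ∈ y.2 ∧ S c < P.z then 1 else 0 : ℕ)) : ℝ) * P.dist f c
              = (∑ f, ∑ c, (b f c : ℝ) * P.dist f c)
                + ∑ c ∈ y.2.filter (fun c => S c < P.z), P.dist y.1 c := by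
            have he : ∀ f c, (((b f c + if f = y.1 ∧ c ∈ y.2 ∧ S c < P.z then 1 else 0 : ℕ)) : ℝ) * P.dist f c
                = (b f c : ℝ) * P.dist f c
                  + (if f = y.1 ∧ c ∈ y.2 ∧ S c < P.z then P.dist f c else 0) := by
              intro f c
              by_cases hf : f = y.1 ∧ c ∈ y.2 ∧ S c < P.z <;> simp [hf] <;> push_cast <;> ring
            have hrw : ∑ f, ∑ c, ((if f = y.1 ∧ c ∈ y.2 ∧ S c < P.z then P.dist f c else 0))
                = ∑ c ∈ y.2.filter (fun c => S c < P.z), P.dist y.1 c := by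
              rw [Finset.sum_comm]
              have hin : ∀ c, ∑ f, (if f = y.1 ∧ c ∈ y.2 ∧ S c < P.z then P.dist f c else 0)
                  = if c ∈ y.2 ∧ S c < P.z then P.dist y.1 c else 0 := by
                intro c
                by_cases hQ : c ∈ y.2 ∧ S c < P.z
                · simp only [hQ, and_true]
                  rw [Finset.sum_ite_eq' Finset.univ y.1 (fun f => P.dist f c)]
                  simp
                · simp [hQ]
              rw [Finset.sum_congr rfl (fun c _ => hin c)]
              rw [← Finset.sum_filter]
              have : Finset.univ.filter (fun c => c ∈ y.2 ∧ S c < P.z)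
                  = y.2.filter (fun c => S c < P.z) := by
                ext c
                simp
              rw [this]
            calc ∑ f, ∑ c, (((b f c + if f = y.1 ∧ c ∈ y.2 ∧ S c < P.z then 1 else 0 : ℕ)) : ℝ) * P.dist f c
                = ∑ f, ∑ c, ((b f c : ℝ) * P.dist f c
                  + (if f = y.1 ∧ c ∈ y.2 ∧ S c < P.z then P.dist f c else 0)) := by
                  exact Finset.sum_congr rfl (fun f _ => Finset.sum_congr rfl (fun c _ => he f c))
              _ = _ := by
                  rw [← hrw]
                  rw [← Finset.sum_add_distrib]
                  exact Finset.sum_congr rfl (fun f _ => by rw [← Finset.sum_add_distrib])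
          rw [e1, e2]
          have : (∑ f, (a f : ℝ) * P.cost f) + P.cost y.1
              + ((∑ f, ∑ c, (b f c : ℝ) * P.dist f c)
                + ∑ c ∈ y.2.filter (fun c => S c < P.z), P.dist y.1 c)
              = ((∑ f, (a f : ℝ) * P.cost f) + (∑ f, ∑ c, (b f c : ℝ) * P.dist f c))
                + P.gam y S := by
            rw [gam]
            ring
          rw [this]
          calc _ ≤ P.V m (P.upd S y.2) + P.gam y S := by linarith
            _ = P.gam y S + P.V m (P.upd S y.2) := by ring
            _ ≤ P.V (m+1) S := hle
      · right
        calc P.Bhat ≤ P.V m (P.upd S y.2) := hB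
          _ ≤ P.gam y S + P.V m (P.upd S y.2) := by linarith [P.gam_nonneg y S]
          _ ≤ P.V (m+1) S := hle

end FL
end FLaux

/-- **Fractional facility-location guarantee (existence form).**
For a facility-location instance with `n ≥ 1` customers admitting a fractional
solution of facility cost at most `k` and assignment cost at most `d`, and any
`N ≥ ln(n)/chern(−ε)` with `(1−ε)·N` a positive integer, there is a fractional
cover `(xh, xha)` whose values are integer multiples of `1/((1−ε)·N)`, with
facility cost plus assignment cost at most `(1−ε)⁻¹·(d + k)`. -/
theorem fractional_facility_location_guarantee
    {F C : Type*} [Fintype F] [Fintype C] [Nonempty C]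
    (cost : F → ℝ) (hcost : ∀ f, 0 ≤ cost f)
    (dist : F → C → ℝ) (hdist : ∀ f c, 0 ≤ dist f c)
    (ε : ℝ) (hε0 : 0 < ε) (hε1 : ε < 1)
    (k d : ℝ) (hk : 0 ≤ k) (hd : 0 ≤ d)
    (hfrac : ∃ (x : F → ℝ) (xa : F → C → ℝ),
      (∀ f, x f ∈ Set.Icc (0 : ℝ) 1) ∧
      (∀ f c, 0 ≤ xa f c) ∧
      (∀ f c, xa f c ≤ x f) ∧
      (∀ c, ∑ f, xa f c = 1) ∧
      (∑ f, x f * cost f ≤ k) ∧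
      (∑ f, ∑ c, xa f c * dist f c ≤ d))
    (N : ℝ)
    (hN : Real.log (Fintype.card C : ℝ) / chern (-ε) ≤ N)
    (hNint : ∃ z : ℕ, 0 < z ∧ (1 - ε) * N = (z : ℝ)) :
    ∃ (xh : F → ℝ) (xha : F → C → ℝ),
      (∀ f, 0 ≤ xh f ∧ ∃ z : ℤ, xh f = (z : ℝ) / ((1 - ε) * N)) ∧
      (∀ f c, 0 ≤ xha f c ∧ ∃ z : ℤ, xha f c = (z : ℝ) / ((1 - ε) * N)) ∧
      (∀ f c, xha f c ≤ xh f) ∧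
      (∀ c, 1 ≤ ∑ f, xha f c) ∧
      ((∑ f, xh f * cost f) + ∑ f, ∑ c, xha f c * dist f c
        ≤ (1 - ε)⁻¹ * (d + k)) := by
  classical
  obtain ⟨x, xa, hx01, hxa0, hxax, hsum, hkb, hdb⟩ := hfrac
  obtain ⟨z, hz0, hzN⟩ := hNint
  have hlam : (0:ℝ) < 1 - ε := by linarith
  have hzr : (0:ℝ) < (z:ℝ) := by exact_mod_cast hz0
  have hN0 : 0 < N := by nlinarith
  by_cases hKz : d + k ≤ 0
  · -- zero-cost case
    have hd0 : d = 0 := by linarith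
    have hk0 : k = 0 := by linarith
    have hxc : ∀ f, x f * cost f = 0 := by
      intro f
      have hall := (Finset.sum_eq_zero_iff_of_nonneg
        (fun f (_ : f ∈ Finset.univ) => mul_nonneg (hx01 f).1 (hcost f))).mp
        (le_antisymm (by linarith [hkb]) (Finset.sum_nonneg
          (fun f _ => mul_nonneg (hx01 f).1 (hcost f))))
      exact hall f (Finset.mem_univ f)
    have hxd : ∀ f c, xa f c * dist f c = 0 := by
      intro f c
      have hnn : ∀ f, 0 ≤ ∑ c, xa f c * dist f c :=
        fun f => Finset.sum_nonneg (fun c _ => mul_nonneg (hxa0 f c) (hdist f c))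
      have hz2 : ∑ f, ∑ c, xa f c * dist f c = 0 :=
        le_antisymm (by linarith [hdb]) (Finset.sum_nonneg (fun f _ => hnn f))
      have hall := (Finset.sum_eq_zero_iff_of_nonneg
        (fun f (_ : f ∈ Finset.univ) => hnn f)).mp hz2
      have hf0 : ∑ c, xa f c * dist f c = 0 := hall f (Finset.mem_univ f)
      have := (Finset.sum_eq_zero_iff_of_nonneg
        (fun c (_ : c ∈ Finset.univ) => mul_nonneg (hxa0 f c) (hdist f c))).mp hf0
      exact this c (Finset.mem_univ c)
    have hex : ∀ c, ∃ f, 0 < xa f c := by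
      intro c
      by_contra hcon
      push_neg at hcon
      have : ∑ f, xa f c = 0 := Finset.sum_eq_zero
        (fun f _ => le_antisymm (hcon f) (hxa0 f c))
      rw [hsum c] at this
      norm_num at this
    choose fc hfc using hex
    have hdist0 : ∀ c, dist (fc c) c = 0 := by
      intro c
      have := hxd (fc c) c
      rcases mul_eq_zero.mp this with h | h
      · exact absurd h (hfc c).ne'
      · exact h
    have hcost0 : ∀ c, cost (fc c) = 0 := by
      intro c
      have hx : 0 < x (fc c) := lt_of_lt_of_le (hfc c) (hxax _ c)
      rcases mul_eq_zero.mp (hxc (fc c)) with h | h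
      · exact absurd h hx.ne'
      · exact h
    refine ⟨fun f => if f ∈ Finset.univ.image fc then 1 else 0,
      fun f c => if f = fc c then 1 else 0, ?_, ?_, ?_, ?_, ?_⟩
    · intro f
      constructor
      · dsimp only
        split_ifs <;> norm_num
      · dsimp only
        split_ifs
        · exact ⟨(z:ℤ), by rw [hzN]; push_cast; rw [div_self hzr.ne']⟩
        · exact ⟨0, by norm_num⟩
    · intro f c
      constructor
      · dsimp only
        split_ifs <;> norm_num
      · dsimp only
        split_ifs
        · exact ⟨(z:ℤ), by rw [hzN]; push_cast; rw [div_self hzr.ne']⟩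
        · exact ⟨0, by norm_num⟩
    · intro f c
      dsimp only
      by_cases h : f = fc c
      · have hmem : f ∈ Finset.univ.image fc := by
          rw [h]; exact Finset.mem_image_of_mem fc (Finset.mem_univ c)
        simp [h, hmem]
      · simp only [h, if_false]
        split_ifs <;> norm_num
    · intro c
      dsimp only
      rw [Finset.sum_ite_eq' Finset.univ (fc c) (fun _ => (1:ℝ))]
      simp
    · have h1 : (∑ f, (if f ∈ Finset.univ.image fc then (1:ℝ) else 0) * cost f) = 0 := by
        apply Finset.sum_eq_zero
        intro f _
        split_ifs with h
        · obtain ⟨c, _, hc⟩ := Finset.mem_image.mp h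
          rw [← hc, hcost0 c, mul_zero]
        · rw [zero_mul]
      have h2 : (∑ f, ∑ c, (if f = fc c then (1:ℝ) else 0) * dist f c) = 0 := by
        apply Finset.sum_eq_zero
        intro f _
        apply Finset.sum_eq_zero
        intro c _
        split_ifs with h
        · rw [h, hdist0 c, mul_zero]
        · rw [zero_mul]
      rw [h1, h2, hd0, hk0]
      norm_num
  · -- main case
    push_neg at hKz
    let P : FLaux.FL F C := ⟨cost, dist, x, xa, ε, z, d + k, N * (d + k),
      hcost, hdist, (fun f => (hx01 f).1), hxa0, hxax, hsum, hε0, hε1, hz0,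
      (by linarith), (mul_nonneg hN0.le (by linarith)), (by linarith)⟩
    -- numeric facts
    set n : ℕ := Fintype.card C with hn
    have hn1 : 1 ≤ n := Fintype.card_pos
    have hn1r : (1:ℝ) ≤ (n:ℝ) := by exact_mod_cast hn1
    have hchern : chern (-ε) = (1-ε) * Real.log (1-ε) + ε := by
      rw [chern]
      have h1 : (1:ℝ) + -ε = 1 - ε := by ring
      rw [h1]
      ring
    have hlaminv1 : (1:ℝ) < (1-ε)⁻¹ := (one_lt_inv₀ hlam).mpr (by linarith)
    have hL : 0 < Real.log ((1-ε)⁻¹) := Real.log_pos hlaminv1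
    have hLneg : Real.log ((1-ε)⁻¹) = -Real.log (1-ε) := Real.log_inv _
    have hchern_pos : 0 < chern (-ε) := by
      have hlog := Real.log_lt_sub_one_of_pos (inv_pos.mpr hlam) hlaminv1.ne'
      -- log((1-ε)⁻¹) < (1-ε)⁻¹ - 1
      have hinv : (1-ε)⁻¹ - 1 = ε * (1-ε)⁻¹ := by
        field_simp
        ring
      rw [hchern, hLneg] at *
      -- -log(1-ε) < ε*(1-ε)⁻¹
      have h2 : -Real.log (1-ε) < ε * (1-ε)⁻¹ := by rw [← hinv]; exact hlog
      have h3 : (1-ε) * (-Real.log (1-ε)) < (1-ε) * (ε * (1-ε)⁻¹) :=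
        mul_lt_mul_of_pos_left h2 hlam
      have h4 : (1-ε) * (ε * (1-ε)⁻¹) = ε := by
        field_simp
      nlinarith
    have hlogn : Real.log n ≤ N * chern (-ε) := (div_le_iff₀ hchern_pos).mp hN
    have hkey : Real.log n + (z:ℝ) * Real.log ((1-ε)⁻¹) ≤ ε * N := by
      have hc : N * chern (-ε) = ε * N - (z:ℝ) * Real.log ((1-ε)⁻¹) := by
        rw [hchern, hLneg]
        have : (z:ℝ) = (1-ε) * N := hzN.symm
        rw [this]
        ring
      linarith
    -- bound on G at the zero state
    set S0 : C → ℕ := fun _ => 0 with hS0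
    have hS0unc : ¬ P.covered S0 := by
      intro h
      have h2 : z ≤ 0 := h (Classical.arbitrary C)
      omega
    set Gam : ℝ := (n:ℝ) * ((1-ε)⁻¹)^z with hGam
    have hGam1 : (1:ℝ) ≤ Gam := by
      have : (1:ℝ) ≤ ((1-ε)⁻¹)^z := one_le_pow₀ hlaminv1.le
      nlinarith
    have hGampos : 0 < Gam := lt_of_lt_of_le one_pos hGam1
    have hGbound : ∀ M : ℕ, P.G M S0 ≤ Gam := by
      intro M
      refine le_trans (P.G_le M S0 hS0unc) ?_
      have hfilt : Finset.univ.filter (fun c => S0 c < P.z) = Finset.univ := by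
        apply Finset.filter_true_of_mem
        intro c _
        exact hz0
      rw [hfilt]
      calc ∑ c : C, P.g M (S0 c) ≤ ∑ c : C, ((1-ε)⁻¹)^z := by
            refine Finset.sum_le_sum (fun c _ => ?_)
            have := P.g_le_pow M 0
            simpa using this
        _ = Gam := by
            rw [Finset.sum_const, nsmul_eq_mul, hGam, hn]
            simp
    have hGlog : ∀ M : ℕ, Real.log (P.G M S0) ≤ Real.log Gam := by
      intro M
      exact Real.log_le_log (lt_of_lt_of_le one_pos (P.G_ge_one M S0)) (hGbound M)
    have hGamlog : Real.log Gam = Real.log n + (z:ℝ) * Real.log ((1-ε)⁻¹) := by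
      rw [hGam, Real.log_mul (by positivity) (by positivity), Real.log_pow]
    -- beta * log Gam < Bhat
    have hXc1 : ε < P.X * P.c1 := P.X_c1_gt_eps
    have hlogGam_pos : 0 < Real.log Gam := by
      rw [hGamlog]
      have : 0 ≤ Real.log n := Real.log_nonneg hn1r
      nlinarith [hzr]
    have hbetalt : P.beta * Real.log Gam < N * (d + k) := by
      have h1 : Real.log Gam ≤ ε * N := by rw [hGamlog]; exact hkey
      have h2 : Real.log Gam / (P.X * P.c1) < Real.log Gam / ε :=
        div_lt_div_of_pos_left hlogGam_pos hε0 hXc1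
      have h3 : Real.log Gam / ε ≤ (ε * N) / ε := (div_le_div_iff_of_pos_right hε0).mpr h1
      have h4 : (ε * N) / ε = N := mul_div_cancel_left₀ N hε0.ne'
      have h5 : Real.log Gam / (P.X * P.c1) < N := by linarith
      have h6 : P.beta * Real.log Gam = (d + k) * (Real.log Gam / (P.X * P.c1)) := by
        have hb : P.beta = (d + k) / (P.X * P.c1) := rfl
        rw [hb]
        ring
      rw [h6]
      calc (d + k) * (Real.log Gam / (P.X * P.c1)) < (d + k) * N :=
            mul_lt_mul_of_pos_left h5 hKz
        _ = N * (d + k) := by ring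
    have hBpos : 0 < N * (d + k) := mul_pos hN0 hKz
    have hgappos : 0 < N * (d + k) - P.beta * Real.log Gam := by linarith
    obtain ⟨M, hM⟩ := exists_pow_lt_of_lt_one
      (div_pos hgappos (mul_pos hBpos hGampos))
      (show Real.exp (-P.c1) < 1 by
        rw [Real.exp_lt_one_iff]
        linarith [P.c1_pos])
    have hexpM : Real.exp (-P.c1 * (M:ℝ)) = (Real.exp (-P.c1))^M := by
      rw [← Real.exp_nat_mul]
      congr 1
      ring
    have htail : N * (d + k) * Real.exp (-P.c1 * (M:ℝ)) * Gam
        < N * (d + k) - P.beta * Real.log Gam := by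
      rw [hexpM]
      calc N * (d + k) * (Real.exp (-P.c1))^M * Gam
          = (Real.exp (-P.c1))^M * (N * (d + k) * Gam) := by ring
        _ < _ := (lt_div_iff₀ (mul_pos hBpos hGampos)).mp hM
    have hVlt : P.V M S0 < N * (d + k) := by
      have h1 := P.V_le M S0
      have h2 : P.beta * Real.log (P.G M S0) ≤ P.beta * Real.log Gam :=
        mul_le_mul_of_nonneg_left (hGlog M) P.beta_nonneg
      have h3 : P.Bhat * Real.exp (-P.c1 * (M:ℝ)) * P.G M S0
          ≤ N * (d + k) * Real.exp (-P.c1 * (M:ℝ)) * Gam := by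
        have hBB : P.Bhat = N * (d + k) := rfl
        rw [hBB]
        exact mul_le_mul_of_nonneg_left (hGbound M)
          (mul_nonneg hBpos.le (Real.exp_nonneg _))
      linarith
    rcases P.extract M S0 with ⟨a, b, hba, hcov, hcostb⟩ | hBle
    · refine ⟨fun f => (a f : ℝ)/(z:ℝ), fun f c => (b f c : ℝ)/(z:ℝ), ?_, ?_, ?_, ?_, ?_⟩
      · intro f
        refine ⟨by positivity, ⟨(a f : ℤ), by rw [hzN]; push_cast; ring⟩⟩
      · intro f c
        refine ⟨by positivity, ⟨(b f c : ℤ), by rw [hzN]; push_cast; ring⟩⟩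
      · intro f c
        exact (div_le_div_iff_of_pos_right hzr).mpr (by exact_mod_cast hba f c)
      · intro c
        have hc : z ≤ 0 + ∑ f, b f c := hcov c
        have hc2 : (z:ℝ) ≤ ∑ f, (b f c : ℝ) := by
          have : z ≤ ∑ f, b f c := by omega
          exact_mod_cast this
        rw [← Finset.sum_div]
        exact (one_le_div hzr).mpr hc2
      · have hcostb2 : (∑ f, (a f : ℝ) * cost f)
            + (∑ f, ∑ c, (b f c : ℝ) * dist f c) ≤ P.V M S0 := hcostb
        have e1 : ∑ f, ((a f : ℝ)/(z:ℝ)) * cost f = (∑ f, (a f:ℝ) * cost f)/(z:ℝ) := by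
          rw [Finset.sum_div]
          exact Finset.sum_congr rfl (fun f _ => by ring)
        have e2 : ∑ f, ∑ c, ((b f c : ℝ)/(z:ℝ)) * dist f c
            = (∑ f, ∑ c, (b f c:ℝ) * dist f c)/(z:ℝ) := by
          rw [Finset.sum_div]
          refine Finset.sum_congr rfl (fun f _ => ?_)
          rw [Finset.sum_div]
          exact Finset.sum_congr rfl (fun c _ => by ring)
        rw [e1, e2, ← add_div]
        have hV : (∑ f, (a f:ℝ) * cost f) + (∑ f, ∑ c, (b f c:ℝ)*dist f c)
            ≤ N*(d+k) := by linarith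
        have hfin : N*(d+k)/(z:ℝ) = (1-ε)⁻¹ * (d+k) := by
          rw [← hzN]
          field_simp
        calc _ ≤ N*(d+k)/(z:ℝ) := (div_le_div_iff_of_pos_right hzr).mpr hV
          _ = _ := hfin
    · exfalso
      have hBB : P.Bhat = N * (d + k) := rfl
      rw [hBB] at hBle
      linarith
end
end
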